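/- arXiv:math/0401404 — 2 statements merged into one kernel-verified Lean document; each statement's English description precedes it below -/
import Mathlib

section
/- A signed permutation γ ∈ B_n (a bijection of ±[n] with γ(−i) = −γ(i)) is join-irreducible in the right weak order if and only if there is exactly one i ∈ {0,1,…,n−1} with γ_i > γ_{i+1} (where γ_0 := −γ_1 when i = 0 is interpreted via the generator s_0). The map sending γ with unique descent at position i to the signed subset A = {γ_{i+1}, …, γ_n} is a bijection between join-irreducibles of B_n and nonempty signed subsets A of [n] (subsets of ±[n] containing no pair {−i, i}) satisfying M > m, where m = min A and M = −m if |A| = n and M = max((±A)ᶜ) otherwise. -/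
/-- `±[n] = {±1, …, ±n} ⊆ ℤ`. -/
noncomputable def pmn (n : ℕ) : Finset ℤ := (Finset.Icc (-(n : ℤ)) (n : ℤ)).erase 0

/-- A signed permutation in `B_n`, realized as a permutation `w` of `ℤ` with
`w(−i) = −w(i)` which fixes everything outside `±[n]`. -/
def SignedPerm (n : ℕ) (w : Equiv.Perm ℤ) : Prop :=
  (∀ i : ℤ, w (-i) = -w i) ∧ ∀ i : ℤ, (n : ℤ) < |i| → w i = i

/-- The left inversion set of a signed permutation, written as the set of pairs
`(b, a)` with `b < a` in `±[n]` appearing in the order `a … b` in full notation. -/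
def invSetB (n : ℕ) (w : Equiv.Perm ℤ) : Set (ℤ × ℤ) :=
  {p | p.1 ∈ pmn n ∧ p.2 ∈ pmn n ∧ p.1 < p.2 ∧ w⁻¹ p.2 < w⁻¹ p.1}

/-- The right weak order on `B_n`: containment of left inversion sets. -/
def weakLEB (n : ℕ) (u w : Equiv.Perm ℤ) : Prop := invSetB n u ⊆ invSetB n w

/-- Cover relation of the right weak order on `B_n`. -/
def weakCovB (n : ℕ) (u w : Equiv.Perm ℤ) : Prop :=
  SignedPerm n u ∧ weakLEB n u w ∧ u ≠ w ∧
    ∀ v, SignedPerm n v → weakLEB n u v → weakLEB n v w → v = u ∨ v = w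

/-- Join-irreducible in the weak order on `B_n`: covers exactly one element. -/
def JoinIrrB (n : ℕ) (γ : Equiv.Perm ℤ) : Prop := ∃! u, weakCovB n u γ

/-- `γ` has a descent at position `i ∈ {0,…,n−1}`: `γ_i > γ_{i+1}`, where position `0`
is interpreted via the generator `s₀`, i.e. a descent at `0` means `γ₁ < 0`. -/
def DescentB (γ : Equiv.Perm ℤ) (i : ℕ) : Prop :=
  if i = 0 then γ 1 < 0 else γ ((i : ℤ) + 1) < γ (i : ℤ)

/-- A signed subset of `[n]`: a subset of `±[n]` containing no pair `{−i, i}`. -/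
def SignedSubset (n : ℕ) (A : Finset ℤ) : Prop :=
  A ⊆ pmn n ∧ ∀ a ∈ A, -a ∉ A

/-- `m = min A` (with junk value for `A = ∅`). -/
def mBs (A : Finset ℤ) : ℤ := A.min.untopD 0

/-- `M`: equal to `−m` if `|A| = n`, and `max((±A)ᶜ)` otherwise. -/
noncomputable def MBs (n : ℕ) (A : Finset ℤ) : ℤ :=
  if A.card = n then -(mBs A)
  else ((pmn n \ (A ∪ A.image (fun a => -a))).max.unbotD 0)

section basics
open Equiv

lemma mem_pmn {n : ℕ} {a : ℤ} : a ∈ pmn n ↔ a ≠ 0 ∧ -(n:ℤ) ≤ a ∧ a ≤ n := by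
  simp [pmn, Finset.mem_erase, Finset.mem_Icc, and_assoc]

lemma neg_mem_pmn {n : ℕ} {a : ℤ} (h : a ∈ pmn n) : -a ∈ pmn n := by
  rw [mem_pmn] at h ⊢; omega

lemma sp_zero {n : ℕ} {w : Perm ℤ} (h : SignedPerm n w) : w 0 = 0 := by
  have := h.1 0; simp at this; omega

lemma sp_neg {n : ℕ} {w : Perm ℤ} (h : SignedPerm n w) (i : ℤ) : w (-i) = -w i := h.1 i

lemma sp_one (n : ℕ) : SignedPerm n 1 := ⟨fun i => rfl, fun i _ => rfl⟩

lemma sp_mul {n : ℕ} {u w : Perm ℤ} (hu : SignedPerm n u) (hw : SignedPerm n w) :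
    SignedPerm n (u * w) := by
  constructor
  · intro i; simp [Perm.mul_apply, hw.1 i, hu.1 (w i)]
  · intro i hi; simp [Perm.mul_apply, hw.2 i hi, hu.2 i hi]

lemma sp_inv {n : ℕ} {w : Perm ℤ} (h : SignedPerm n w) : SignedPerm n w⁻¹ := by
  constructor
  · intro i
    apply w.injective
    simp only [← Equiv.Perm.mul_apply, mul_inv_cancel, Equiv.Perm.one_apply]
    rw [h.1 (w⁻¹ i)]
    simp
  · intro i hi
    apply w.injective
    simp only [← Equiv.Perm.mul_apply, mul_inv_cancel, Equiv.Perm.one_apply]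
    exact (h.2 i hi).symm

lemma sp_maps {n : ℕ} {w : Perm ℤ} (h : SignedPerm n w) {a : ℤ} (ha : a ∈ pmn n) :
    w a ∈ pmn n := by
  rw [mem_pmn] at ha ⊢
  constructor
  · intro h0
    have : w a = w 0 := by rw [sp_zero h]; exact h0
    exact ha.1 (w.injective this)
  · by_contra hb
    have hgt : (n:ℤ) < |w a| := by
      rcases abs_cases (w a) with ⟨he, _⟩ | ⟨he, _⟩ <;> omega
    have := h.2 (w a) hgt
    have := w.injective this
    rcases abs_cases (w a) with ⟨he, _⟩ | ⟨he, _⟩ <;> omega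

lemma sp_ne_of_gt {n : ℕ} {w : Perm ℤ} (h : SignedPerm n w) : True := trivial

/-- rank of x in S -/
def rnk (S : Finset ℤ) (x : ℤ) : ℕ := (S.filter (· < x)).card

lemma rnk_inj {S : Finset ℤ} {x y : ℤ} (hx : x ∈ S) (hy : y ∈ S)
    (h : rnk S x = rnk S y) : x = y := by
  rcases lt_trichotomy x y with hlt | he | hlt
  · exfalso
    have hss : S.filter (· < x) ⊂ S.filter (· < y) := by
      constructor
      · intro z hz; simp only [Finset.mem_filter] at hz ⊢; exact ⟨hz.1, hz.2.trans hlt⟩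
      · intro hcon
        have := hcon (Finset.mem_filter.2 ⟨hx, hlt⟩)
        simp at this
    have := Finset.card_lt_card hss
    simp only [rnk] at h; omega
  · exact he
  · exfalso
    have hss : S.filter (· < y) ⊂ S.filter (· < x) := by
      constructor
      · intro z hz; simp only [Finset.mem_filter] at hz ⊢; exact ⟨hz.1, hz.2.trans hlt⟩
      · intro hcon
        have := hcon (Finset.mem_filter.2 ⟨hy, hlt⟩)
        simp at this
    have := Finset.card_lt_card hss
    simp only [rnk] at h; omega

lemma inv_mem_invSetB {n : ℕ} {w : Perm ℤ} {b a : ℤ} :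
    (b, a) ∈ invSetB n w ↔ b ∈ pmn n ∧ a ∈ pmn n ∧ b < a ∧ w⁻¹ a < w⁻¹ b := Iff.rfl

/-- symmetry of inversion sets -/
lemma invSetB_neg {n : ℕ} {w : Perm ℤ} (hw : SignedPerm n w) {b a : ℤ} :
    (b, a) ∈ invSetB n w ↔ (-a, -b) ∈ invSetB n w := by
  have hwi := sp_inv hw
  simp only [inv_mem_invSetB]
  constructor
  · rintro ⟨h1, h2, h3, h4⟩
    refine ⟨neg_mem_pmn h2, neg_mem_pmn h1, by omega, ?_⟩
    rw [hwi.1 b, hwi.1 a]; omega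
  · rintro ⟨h1, h2, h3, h4⟩
    rw [hwi.1 b, hwi.1 a] at h4
    have h1' : a ∈ pmn n := by have := neg_mem_pmn h1; simpa using this
    have h2' : b ∈ pmn n := by have := neg_mem_pmn h2; simpa using this
    exact ⟨h2', h1', by omega, by omega⟩

/-- Lemma A: the inversion set determines the signed permutation -/
lemma invSetB_inj {n : ℕ} {u v : Perm ℤ} (hu : SignedPerm n u) (hv : SignedPerm n v)
    (h : invSetB n u = invSetB n v) : u = v := by
  have key : ∀ a ∈ pmn n, u⁻¹ a = v⁻¹ a := by
    intro a ha
    have hfil : (pmn n).filter (fun b => u⁻¹ b < u⁻¹ a) =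
        (pmn n).filter (fun b => v⁻¹ b < v⁻¹ a) := by
      apply Finset.filter_congr
      intro b hb
      rcases lt_trichotomy b a with hlt | he | hlt
      · have hne : u⁻¹ b ≠ u⁻¹ a := fun hc => (by omega : b ≠ a) (u⁻¹.injective hc)
        have hne' : v⁻¹ b ≠ v⁻¹ a := fun hc => (by omega : b ≠ a) (v⁻¹.injective hc)
        have hiff : (b, a) ∈ invSetB n u ↔ (b, a) ∈ invSetB n v := by rw [h]
        simp only [inv_mem_invSetB, hb, ha, hlt, true_and] at hiff
        constructor <;> intro hx <;> by_contra hy <;> push_neg at hy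
        · exact absurd (hiff.1 (by omega)) (by omega)
        · exact absurd (hiff.2 (by omega)) (by omega)
      · subst he; simp [lt_irrefl]
      · have hiff : (a, b) ∈ invSetB n u ↔ (a, b) ∈ invSetB n v := by rw [h]
        simp only [inv_mem_invSetB, hb, ha, hlt, true_and] at hiff
        exact hiff
    have himg : ∀ (w : Perm ℤ), SignedPerm n w →
        (pmn n).filter (fun b => w⁻¹ b < w⁻¹ a) = ((pmn n).filter (· < w⁻¹ a)).image w := by
      intro w hw
      ext b
      simp only [Finset.mem_filter, Finset.mem_image]
      constructor
      · rintro ⟨hb, hlt⟩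
        exact ⟨w⁻¹ b, ⟨sp_maps (sp_inv hw) hb, hlt⟩, by simp⟩
      · rintro ⟨c, hc, rfl⟩
        refine ⟨sp_maps hw hc.1, by simpa using hc.2⟩
    have hc1 := himg u hu
    have hc2 := himg v hv
    have hcard : rnk (pmn n) (u⁻¹ a) = rnk (pmn n) (v⁻¹ a) := by
      unfold rnk
      have e1 := congrArg Finset.card hc1
      have e2 := congrArg Finset.card hc2
      rw [Finset.card_image_of_injective _ u.injective] at e1
      rw [Finset.card_image_of_injective _ v.injective] at e2
      rw [← e1, ← e2, hfil]
    exact rnk_inj (sp_maps (sp_inv hu) ha) (sp_maps (sp_inv hv) ha) hcard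
  have : u⁻¹ = v⁻¹ := by
    apply Equiv.ext
    intro x
    by_cases hx : x ∈ pmn n
    · exact key x hx
    · rw [mem_pmn] at hx
      push_neg at hx
      by_cases h0 : x = 0
      · subst h0; rw [sp_zero (sp_inv hu), sp_zero (sp_inv hv)]
      · have hgt : (n:ℤ) < |x| := by rcases abs_cases x with ⟨he,_⟩|⟨he,_⟩ <;> omega
        rw [(sp_inv hu).2 x hgt, (sp_inv hv).2 x hgt]
  exact inv_injective this

end basics
section toggles
open Equiv

/-- the generator s_i -/
def sB (i : ℕ) : Perm ℤ :=
  if i = 0 then Equiv.swap 1 (-1)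
  else Equiv.swap (i : ℤ) ((i : ℤ)+1) * Equiv.swap (-(i:ℤ)) (-((i:ℤ)+1))

lemma swap_lt {n : ℕ} {p q x y : ℤ} (hp : p ∈ pmn n) (hq : q ∈ pmn n)
    (hx : x ∈ pmn n) (hy : y ∈ pmn n) (hpq : p < q)
    (hadj : ∀ z ∈ pmn n, ¬(p < z ∧ z < q)) :
    (Equiv.swap p q x < Equiv.swap p q y ↔ ((x < y ∧ ¬(x = p ∧ y = q)) ∨ (x = q ∧ y = p))) := by
  have hax := hadj x hx
  have hay := hadj y hy
  rw [Equiv.swap_apply_def, Equiv.swap_apply_def]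
  split_ifs <;> omega

/-- descent toggle: multiplying by an adjacent transposition at a descent removes one inversion -/
lemma toggle_desc {n : ℕ} {w : Perm ℤ} (hw : ∀ a ∈ pmn n, w a ∈ pmn n)
    (hw' : ∀ a ∈ pmn n, w⁻¹ a ∈ pmn n)
    {p q : ℤ} (hp : p ∈ pmn n) (hq : q ∈ pmn n) (hpq : p < q)
    (hadj : ∀ z ∈ pmn n, ¬(p < z ∧ z < q)) (hdesc : w q < w p) :
    invSetB n (w * Equiv.swap p q) = invSetB n w \ {(w q, w p)} := by
  ext ⟨b, a⟩
  have hinv : ∀ x, (w * Equiv.swap p q)⁻¹ x = Equiv.swap p q (w⁻¹ x) := by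
    intro x; simp [Equiv.Perm.mul_apply, Equiv.swap_inv]
  simp only [inv_mem_invSetB, Set.mem_diff, Set.mem_singleton_iff, hinv, Prod.mk.injEq]
  constructor
  · rintro ⟨h1, h2, h3, h4⟩
    rw [swap_lt hp hq (hw' a h2) (hw' b h1) hpq hadj] at h4
    rcases h4 with ⟨h5, h6⟩ | ⟨h5, h6⟩
    · refine ⟨⟨h1, h2, h3, h5⟩, ?_⟩
      rintro ⟨rfl, rfl⟩
      simp at h6
    · exfalso
      have ha : a = w q := by rw [← h5]; simp
      have hb : b = w p := by rw [← h6]; simp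
      omega
  · rintro ⟨⟨h1, h2, h3, h4⟩, hne⟩
    refine ⟨h1, h2, h3, ?_⟩
    rw [swap_lt hp hq (hw' a h2) (hw' b h1) hpq hadj]
    left
    refine ⟨h4, ?_⟩
    rintro ⟨hhp, hhq⟩
    exact hne ⟨by rw [← hhq]; simp, by rw [← hhp]; simp⟩

lemma toggle_desc_mem {n : ℕ} {w : Perm ℤ} (hw : ∀ a ∈ pmn n, w a ∈ pmn n)
    {p q : ℤ} (hp : p ∈ pmn n) (hq : q ∈ pmn n) (hpq : p < q) (hdesc : w q < w p) :
    (w q, w p) ∈ invSetB n w := by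
  refine ⟨hw q hq, hw p hp, hdesc, ?_⟩
  simp [hpq]

end toggles
section sBlemmas
open Equiv

lemma sB0_apply (x : ℤ) : sB 0 x = if x = 1 then -1 else if x = -1 then 1 else x := by
  have h : sB 0 = Equiv.swap 1 (-1) := rfl
  rw [h, Equiv.swap_apply_def]

lemma sB_apply {i : ℕ} (hi : 1 ≤ i) (x : ℤ) :
    sB i x = if x = (i:ℤ) then (i:ℤ)+1 else if x = (i:ℤ)+1 then (i:ℤ)
      else if x = -(i:ℤ) then -((i:ℤ)+1) else if x = -((i:ℤ)+1) then -(i:ℤ) else x := by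
  have h0 : i ≠ 0 := by omega
  have h1 : (1:ℤ) ≤ (i:ℤ) := by exact_mod_cast hi
  have h : sB i = Equiv.swap (i : ℤ) ((i : ℤ)+1) * Equiv.swap (-(i:ℤ)) (-((i:ℤ)+1)) := by
    rw [sB, if_neg h0]
  rw [h]
  simp only [Equiv.Perm.mul_apply, Equiv.swap_apply_def]
  split_ifs <;> omega

lemma sp_sB {n i : ℕ} (hi : i < n) : SignedPerm n (sB i) := by
  rcases Nat.eq_zero_or_pos i with rfl | hpos
  · constructor
    · intro x; rw [sB0_apply, sB0_apply]; split_ifs <;> omega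
    · intro x hx; rw [sB0_apply]
      have hn : (1:ℤ) ≤ (n:ℤ) := by exact_mod_cast hi
      rcases abs_cases x with ⟨he,_⟩|⟨he,_⟩ <;> split_ifs <;> omega
  · have h1 : (1:ℤ) ≤ (i:ℤ) := by exact_mod_cast hpos
    have h2 : (i:ℤ)+1 ≤ (n:ℤ) := by exact_mod_cast hi
    constructor
    · intro x; rw [sB_apply hpos, sB_apply hpos]; split_ifs <;> omega
    · intro x hx; rw [sB_apply hpos]
      rcases abs_cases x with ⟨he,_⟩|⟨he,_⟩ <;> split_ifs <;> omega

/-- the inversion pairs removed by multiplying by `sB i` at a descent -/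
def dset (γ : Perm ℤ) (i : ℕ) : Set (ℤ × ℤ) :=
  if i = 0 then {(γ 1, -(γ 1))}
  else {(γ ((i:ℤ)+1), γ (i:ℤ)), (-(γ (i:ℤ)), -(γ ((i:ℤ)+1)))}

lemma dset_neg_closed {n : ℕ} {γ : Perm ℤ} (hγ : SignedPerm n γ) {i : ℕ} {b a : ℤ}
    (h : (b, a) ∈ dset γ i) : (-a, -b) ∈ dset γ i := by
  unfold dset at h ⊢
  split_ifs at h ⊢ with h0
  · simp only [Set.mem_singleton_iff, Prod.mk.injEq] at h ⊢
    omega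
  · simp only [Set.mem_insert_iff, Set.mem_singleton_iff, Prod.mk.injEq] at h ⊢
    rcases h with ⟨rfl, rfl⟩ | ⟨rfl, rfl⟩
    · right; omega
    · left; omega

lemma dset_sub {n : ℕ} {γ : Perm ℤ} (hγ : SignedPerm n γ) {i : ℕ} (hi : i < n)
    (hd : DescentB γ i) : dset γ i ⊆ invSetB n γ := by
  intro ⟨b, a⟩ h
  unfold dset at h
  split_ifs at h with h0
  · subst h0
    simp only [Set.mem_singleton_iff, Prod.mk.injEq] at h
    obtain ⟨rfl, rfl⟩ := h
    have hd' : γ 1 < 0 := by simpa [DescentB] using hd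
    have h1 : (1:ℤ) ∈ pmn n := by rw [mem_pmn]; omega
    have hm1 : (-1:ℤ) ∈ pmn n := by rw [mem_pmn]; omega
    have hg1 := sp_maps hγ h1
    have e1 : γ⁻¹ (-(γ 1)) = -1 := by rw [(sp_inv hγ).1]; simp
    refine ⟨hg1, neg_mem_pmn hg1, by omega, by rw [e1]; simp⟩
  · have hd' : γ ((i:ℤ)+1) < γ (i:ℤ) := by simpa [DescentB, h0] using hd
    have h1 : (1:ℤ) ≤ (i:ℤ) := by
      have : 1 ≤ i := Nat.one_le_iff_ne_zero.2 h0; exact_mod_cast this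
    have h2 : (i:ℤ)+1 ≤ (n:ℤ) := by exact_mod_cast hi
    have hip : (i:ℤ) ∈ pmn n := by rw [mem_pmn]; omega
    have hiq : (i:ℤ)+1 ∈ pmn n := by rw [mem_pmn]; omega
    simp only [Set.mem_insert_iff, Set.mem_singleton_iff, Prod.mk.injEq] at h
    rcases h with ⟨rfl, rfl⟩ | ⟨rfl, rfl⟩
    · exact ⟨sp_maps hγ hiq, sp_maps hγ hip, hd',
        by simp only [← Equiv.Perm.mul_apply, inv_mul_cancel, Equiv.Perm.one_apply]; omega⟩
    · rw [← invSetB_neg hγ]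
      exact ⟨sp_maps hγ hiq, sp_maps hγ hip, hd',
        by simp only [← Equiv.Perm.mul_apply, inv_mul_cancel, Equiv.Perm.one_apply]; omega⟩

/-- key computation: multiplying at a descent removes exactly `dset` -/
lemma inv_mul_sB {n : ℕ} {γ : Perm ℤ} (hγ : SignedPerm n γ) {i : ℕ} (hi : i < n)
    (hd : DescentB γ i) : invSetB n (γ * sB i) = invSetB n γ \ dset γ i := by
  rcases Nat.eq_zero_or_pos i with rfl | hpos
  · have hd' : γ 1 < 0 := by simpa [DescentB] using hd
    have hn : (1:ℤ) ≤ (n:ℤ) := by exact_mod_cast hi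
    have h1 : (1:ℤ) ∈ pmn n := by rw [mem_pmn]; omega
    have hm1 : (-1:ℤ) ∈ pmn n := by rw [mem_pmn]; omega
    have hadj : ∀ z ∈ pmn n, ¬((-1:ℤ) < z ∧ z < 1) := by
      intro z hz; rw [mem_pmn] at hz; omega
    have hsw : sB 0 = Equiv.swap (-1 : ℤ) 1 := by
      have h : sB 0 = Equiv.swap 1 (-1) := rfl
      rw [h, Equiv.swap_comm]
    rw [hsw]
    have := toggle_desc (n := n) (w := γ) (fun a ha => sp_maps hγ ha)
      (fun a ha => sp_maps (sp_inv hγ) ha) hm1 h1 (by omega) hadj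
      (by rw [hγ.1 1]; omega)
    rw [this]
    congr 1
    simp [dset, hγ.1 1]
  · have h0 : i ≠ 0 := by omega
    have hd' : γ ((i:ℤ)+1) < γ (i:ℤ) := by simpa [DescentB, h0] using hd
    have h1 : (1:ℤ) ≤ (i:ℤ) := by exact_mod_cast hpos
    have h2 : (i:ℤ)+1 ≤ (n:ℤ) := by exact_mod_cast hi
    have hip : (i:ℤ) ∈ pmn n := by rw [mem_pmn]; omega
    have hiq : (i:ℤ)+1 ∈ pmn n := by rw [mem_pmn]; omega
    have hinp : -((i:ℤ)+1) ∈ pmn n := by rw [mem_pmn]; omega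
    have hinq : -(i:ℤ) ∈ pmn n := by rw [mem_pmn]; omega
    have hadj1 : ∀ z ∈ pmn n, ¬((i:ℤ) < z ∧ z < (i:ℤ)+1) := by
      intro z hz; omega
    have hadj2 : ∀ z ∈ pmn n, ¬(-((i:ℤ)+1) < z ∧ z < -(i:ℤ)) := by
      intro z hz; omega
    have hsB : sB i = Equiv.swap (i:ℤ) ((i:ℤ)+1) * Equiv.swap (-(i:ℤ)) (-((i:ℤ)+1)) := by
      rw [sB, if_neg h0]
    have step1 := toggle_desc (n := n) (w := γ) (fun a ha => sp_maps hγ ha)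
      (fun a ha => sp_maps (sp_inv hγ) ha) hip hiq (by omega) hadj1 hd'
    have hw2maps : ∀ a ∈ pmn n, (γ * Equiv.swap (i:ℤ) ((i:ℤ)+1)) a ∈ pmn n := by
      intro a ha
      have ht : Equiv.swap (i:ℤ) ((i:ℤ)+1) a ∈ pmn n := by
        rw [Equiv.swap_apply_def]
        split_ifs <;> first | exact hiq | exact hip | exact ha
      exact sp_maps hγ ht
    have hw2maps' : ∀ a ∈ pmn n, (γ * Equiv.swap (i:ℤ) ((i:ℤ)+1))⁻¹ a ∈ pmn n := by
      intro a ha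
      have h3 : (γ * Equiv.swap (i:ℤ) ((i:ℤ)+1))⁻¹ a
          = (Equiv.swap (i:ℤ) ((i:ℤ)+1))⁻¹ (γ⁻¹ a) := by simp
      rw [h3, Equiv.swap_inv, Equiv.swap_apply_def]
      have := sp_maps (sp_inv hγ) ha
      split_ifs <;> first | exact hiq | exact hip | exact this
    have hv1 : (γ * Equiv.swap (i:ℤ) ((i:ℤ)+1)) (-((i:ℤ)+1)) = -(γ ((i:ℤ)+1)) := by
      have ht : Equiv.swap (i:ℤ) ((i:ℤ)+1) (-((i:ℤ)+1)) = -((i:ℤ)+1) :=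
        Equiv.swap_apply_of_ne_of_ne (by omega) (by omega)
      rw [Equiv.Perm.mul_apply, ht, hγ.1]
    have hv2 : (γ * Equiv.swap (i:ℤ) ((i:ℤ)+1)) (-(i:ℤ)) = -(γ (i:ℤ)) := by
      have ht : Equiv.swap (i:ℤ) ((i:ℤ)+1) (-(i:ℤ)) = -(i:ℤ) :=
        Equiv.swap_apply_of_ne_of_ne (by omega) (by omega)
      rw [Equiv.Perm.mul_apply, ht, hγ.1]
    have step2 := toggle_desc (n := n) (w := γ * Equiv.swap (i:ℤ) ((i:ℤ)+1))
      hw2maps hw2maps' hinp hinq (by omega) hadj2 (by rw [hv1, hv2]; omega)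
    have hsplit : γ * sB i
        = (γ * Equiv.swap (i:ℤ) ((i:ℤ)+1)) * Equiv.swap (-((i:ℤ)+1)) (-(i:ℤ)) := by
      rw [hsB, ← mul_assoc]
      congr 1
      exact Equiv.swap_comm _ _
    rw [hsplit, step2, step1, hv1, hv2, Set.diff_diff]
    congr 1
    unfold dset
    rw [if_neg h0, Set.insert_eq]

end sBlemmas
section claim
open Equiv

lemma not_inv_lt {n : ℕ} {u : Perm ℤ} {b a : ℤ} (hb : b ∈ pmn n) (ha : a ∈ pmn n)
    (hba : b < a) (hn : (b, a) ∉ invSetB n u) : u⁻¹ b < u⁻¹ a := by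
  have hne : u⁻¹ b ≠ u⁻¹ a := fun hc => (by omega : b ≠ a) (u⁻¹.injective hc)
  have : ¬(u⁻¹ a < u⁻¹ b) := fun hc => hn ⟨hb, ha, hba, hc⟩
  omega

lemma exists_adj_desc {n : ℕ} {u γ : Perm ℤ} (hγ : SignedPerm n γ)
    (hsub : invSetB n u ⊆ invSetB n γ) {b₀ a₀ : ℤ}
    (hmem₀ : (b₀, a₀) ∈ invSetB n γ) (hnot₀ : (b₀, a₀) ∉ invSetB n u) :
    ∃ x y : ℤ, x ∈ pmn n ∧ y ∈ pmn n ∧ x < y ∧ (∀ z ∈ pmn n, ¬(x < z ∧ z < y)) ∧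
      (γ y, γ x) ∈ invSetB n γ ∧ (γ y, γ x) ∉ invSetB n u := by
  suffices H : ∀ k : ℕ, ∀ b a : ℤ, (b, a) ∈ invSetB n γ → (b, a) ∉ invSetB n u →
      (γ⁻¹ b - γ⁻¹ a).toNat ≤ k →
      ∃ x y : ℤ, x ∈ pmn n ∧ y ∈ pmn n ∧ x < y ∧ (∀ z ∈ pmn n, ¬(x < z ∧ z < y)) ∧
        (γ y, γ x) ∈ invSetB n γ ∧ (γ y, γ x) ∉ invSetB n u by
    exact H _ b₀ a₀ hmem₀ hnot₀ le_rfl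
  intro k
  induction k with
  | zero =>
    intro b a hm _ hk
    obtain ⟨_, _, _, hlt⟩ := inv_mem_invSetB.1 hm
    omega
  | succ k ih =>
    intro b a hm hn hk
    obtain ⟨hbP, haP, hba, hlt⟩ := inv_mem_invSetB.1 hm
    have hxP : γ⁻¹ a ∈ pmn n := sp_maps (sp_inv hγ) haP
    have hyP : γ⁻¹ b ∈ pmn n := sp_maps (sp_inv hγ) hbP
    by_cases hadj : ∀ z ∈ pmn n, ¬(γ⁻¹ a < z ∧ z < γ⁻¹ b)
    · refine ⟨γ⁻¹ a, γ⁻¹ b, hxP, hyP, hlt, hadj, ?_, ?_⟩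
      · simpa using (inv_mem_invSetB.2 ⟨hbP, haP, hba, hlt⟩ : (b, a) ∈ invSetB n γ)
      · simpa using hn
    · push_neg at hadj
      obtain ⟨z, hzP, hxz, hzy⟩ := hadj
      have hub : u⁻¹ b < u⁻¹ a := not_inv_lt hbP haP hba hn
      set c := γ z with hc
      have hcP : c ∈ pmn n := sp_maps hγ hzP
      have hgz : γ⁻¹ c = z := by simp [hc]
      have hca : c ≠ a := fun h => by
        have : z = γ⁻¹ a := by rw [← hgz, h]
        omega
      have hcb : c ≠ b := fun h => by
        have : z = γ⁻¹ b := by rw [← hgz, h]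
        omega
      rcases lt_trichotomy c a with hlt1 | he | hlt1
      · rcases lt_trichotomy c b with hlt2 | he2 | hlt2
        · -- c < b : use pair (c, a)
          have hmem' : (c, a) ∈ invSetB n γ := inv_mem_invSetB.2 ⟨hcP, haP, by omega, by omega⟩
          have hnot' : (c, a) ∉ invSetB n u := by
            intro hmu
            obtain ⟨_, _, _, h4⟩ := inv_mem_invSetB.1 hmu
            have : (c, b) ∈ invSetB n u := inv_mem_invSetB.2 ⟨hcP, hbP, hlt2, by omega⟩
            obtain ⟨_, _, _, h5⟩ := inv_mem_invSetB.1 (hsub this)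
            omega
          exact ih c a hmem' hnot' (by omega)
        · exact absurd he2 hcb
        · -- b < c < a
          by_cases hcu : u⁻¹ a < u⁻¹ c
          · -- use (b, c)
            have hmem' : (b, c) ∈ invSetB n γ := inv_mem_invSetB.2 ⟨hbP, hcP, hlt2, by omega⟩
            have hnot' : (b, c) ∉ invSetB n u := by
              intro hmu
              obtain ⟨_, _, _, h4⟩ := inv_mem_invSetB.1 hmu
              omega
            exact ih b c hmem' hnot' (by omega)
          · -- use (c, a)
            have hmem' : (c, a) ∈ invSetB n γ := inv_mem_invSetB.2 ⟨hcP, haP, hlt1, by omega⟩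
            have hnot' : (c, a) ∉ invSetB n u := by
              intro hmu
              obtain ⟨_, _, _, h4⟩ := inv_mem_invSetB.1 hmu
              omega
            exact ih c a hmem' hnot' (by omega)
      · exact absurd he hca
      · -- a < c : use pair (b, c)
        have hmem' : (b, c) ∈ invSetB n γ := inv_mem_invSetB.2 ⟨hbP, hcP, by omega, by omega⟩
        have hnot' : (b, c) ∉ invSetB n u := by
          intro hmu
          obtain ⟨_, _, _, h4⟩ := inv_mem_invSetB.1 hmu
          have : (a, c) ∈ invSetB n u := inv_mem_invSetB.2 ⟨haP, hcP, hlt1, by omega⟩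
          obtain ⟨_, _, _, h5⟩ := inv_mem_invSetB.1 (hsub this)
          omega
        exact ih b c hmem' hnot' (by omega)

lemma adj_cases {n : ℕ} {x y : ℤ} (hx : x ∈ pmn n) (hy : y ∈ pmn n) (hxy : x < y)
    (hadj : ∀ z ∈ pmn n, ¬(x < z ∧ z < y)) :
    (1 ≤ x ∧ y = x + 1) ∨ (y ≤ -1 ∧ y = x + 1) ∨ (x = -1 ∧ y = 1) := by
  rw [mem_pmn] at hx hy
  by_cases hx1 : 1 ≤ x
  · left
    refine ⟨hx1, ?_⟩
    by_contra hne
    exact hadj (x+1) (mem_pmn.2 ⟨by omega, by omega, by omega⟩) ⟨by omega, by omega⟩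
  · by_cases hy1 : y ≤ -1
    · right; left
      refine ⟨hy1, ?_⟩
      by_contra hne
      exact hadj (x+1) (mem_pmn.2 ⟨by omega, by omega, by omega⟩) ⟨by omega, by omega⟩
    · right; right
      have hxneg : x ≤ -1 := by omega
      have hypos : 1 ≤ y := by omega
      constructor
      · by_contra hne
        exact hadj (-1) (mem_pmn.2 ⟨by omega, by omega, by omega⟩) ⟨by omega, by omega⟩
      · by_contra hne
        exact hadj 1 (mem_pmn.2 ⟨by omega, by omega, by omega⟩) ⟨by omega, by omega⟩

end claim
section cover
open Equiv

def negP (p : ℤ × ℤ) : ℤ × ℤ := (-p.2, -p.1)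

lemma negP_negP (p : ℤ × ℤ) : negP (negP p) = p := by simp [negP]

/-- the lead removed pair -/
def dlead (γ : Perm ℤ) (i : ℕ) : ℤ × ℤ :=
  if i = 0 then (γ 1, -(γ 1)) else (γ ((i:ℤ)+1), γ (i:ℤ))

lemma mem_dset_iff {γ : Perm ℤ} {i : ℕ} {e : ℤ × ℤ} :
    e ∈ dset γ i ↔ e = dlead γ i ∨ e = negP (dlead γ i) := by
  unfold dset dlead
  split_ifs with h0
  · simp only [Set.mem_singleton_iff]
    constructor
    · exact Or.inl
    · rintro (h | h)
      · exact h
      · rw [h]; simp [negP]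
  · simp only [Set.mem_insert_iff, Set.mem_singleton_iff]
    constructor
    · rintro (h | h)
      · exact Or.inl h
      · right; rw [h]; rfl
    · rintro (h | h)
      · exact Or.inl h
      · right; rw [h]; rfl

lemma negP_mem_inv {n : ℕ} {v : Perm ℤ} (hv : SignedPerm n v) {e : ℤ × ℤ}
    (he : e ∈ invSetB n v) : negP e ∈ invSetB n v := by
  obtain ⟨b, a⟩ := e
  exact (invSetB_neg hv).1 he

lemma dlead_mem_inv {n : ℕ} {γ : Perm ℤ} (hγ : SignedPerm n γ) {i : ℕ} (hi : i < n)
    (hd : DescentB γ i) : dlead γ i ∈ invSetB n γ :=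
  dset_sub hγ hi hd (mem_dset_iff.2 (Or.inl rfl))

lemma cov_of_descent {n : ℕ} {γ : Perm ℤ} (hγ : SignedPerm n γ) {i : ℕ} (hi : i < n)
    (hd : DescentB γ i) : weakCovB n (γ * sB i) γ := by
  have hinv := inv_mul_sB hγ hi hd
  have hsp := sp_mul hγ (sp_sB hi)
  have hdl : dlead γ i ∈ dset γ i := mem_dset_iff.2 (Or.inl rfl)
  have hdlinv : dlead γ i ∈ invSetB n γ := dset_sub hγ hi hd hdl
  refine ⟨hsp, ?_, ?_, ?_⟩
  · rw [weakLEB, hinv]; exact Set.diff_subset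
  · intro he
    have h2 : invSetB n γ \ dset γ i = invSetB n γ := by rw [← hinv, he]
    rw [← h2] at hdlinv
    exact hdlinv.2 hdl
  · intro v hv h1 h2
    rw [weakLEB, hinv] at h1
    rw [weakLEB] at h2
    by_cases hcase : dlead γ i ∈ invSetB n v
    · right
      apply invSetB_inj hv hγ
      apply Set.Subset.antisymm h2
      intro e he
      by_cases hedset : e ∈ dset γ i
      · rcases mem_dset_iff.1 hedset with rfl | rfl
        · exact hcase
        · exact negP_mem_inv hv hcase
      · exact h1 ⟨he, hedset⟩
    · left
      apply invSetB_inj hv hsp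
      apply Set.Subset.antisymm
      · intro e he
        rw [hinv]
        refine ⟨h2 he, fun hedset => ?_⟩
        rcases mem_dset_iff.1 hedset with rfl | rfl
        · exact hcase he
        · exact hcase (negP_negP (dlead γ i) ▸ negP_mem_inv hv he)
      · rw [hinv]; exact h1

lemma cov_to_descent {n : ℕ} {γ u : Perm ℤ} (hγ : SignedPerm n γ)
    (hcov : weakCovB n u γ) : ∃ i : ℕ, i < n ∧ DescentB γ i ∧ u = γ * sB i := by
  obtain ⟨hu, hle, hne, hbtw⟩ := hcov
  rw [weakLEB] at hle
  have finish : ∀ i : ℕ, i < n → DescentB γ i → dlead γ i ∉ invSetB n u → u = γ * sB i := by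
    intro i hi hd hnot
    have hinv := inv_mul_sB hγ hi hd
    have hsp := sp_mul hγ (sp_sB hi)
    have husub : weakLEB n u (γ * sB i) := by
      rw [weakLEB, hinv]
      intro e he
      refine ⟨hle he, fun hedset => ?_⟩
      rcases mem_dset_iff.1 hedset with rfl | rfl
      · exact hnot he
      · exact hnot (negP_negP (dlead γ i) ▸ negP_mem_inv hu he)
    rcases hbtw (γ * sB i) hsp husub (by rw [weakLEB, hinv]; exact Set.diff_subset) with h | h
    · exact h.symm
    · exfalso
      have h2 : invSetB n γ \ dset γ i = invSetB n γ := by rw [← hinv, h]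
      have hdlinv := dlead_mem_inv hγ hi hd
      rw [← h2] at hdlinv
      exact hdlinv.2 (mem_dset_iff.2 (Or.inl rfl))
  -- find a pair in invSetB γ \ invSetB u
  have hnsub : ¬ invSetB n γ ⊆ invSetB n u := by
    intro h2
    exact hne (invSetB_inj hu hγ (Set.Subset.antisymm hle h2))
  obtain ⟨d, hd1, hd2⟩ := Set.not_subset.1 hnsub
  obtain ⟨b, a⟩ := d
  obtain ⟨x, y, hxP, hyP, hxy, hadj, hmem, hnot⟩ := exists_adj_desc hγ hle hd1 hd2
  obtain ⟨hP1, hP2, hltv, _⟩ := inv_mem_invSetB.1 hmem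
  rcases adj_cases hxP hyP hxy hadj with ⟨hx1, hyx⟩ | ⟨hy1, hyx⟩ | ⟨hxm, hy1⟩
  · -- positive case
    set i := x.toNat with hi
    have hxi : (i:ℤ) = x := Int.toNat_of_nonneg (by omega)
    have hi0 : i ≠ 0 := by omega
    have hin : i < n := by
      have := (mem_pmn.1 hyP).2.2
      omega
    have hdl : dlead γ i = (γ y, γ x) := by
      rw [dlead, if_neg hi0, hxi]
      rw [show (x:ℤ) + 1 = y by omega]
    have hdesc : DescentB γ i := by
      rw [DescentB, if_neg hi0, hxi, show (x:ℤ) + 1 = y by omega]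
      exact hltv
    exact ⟨i, hin, hdesc, finish i hin hdesc (by rw [hdl]; exact hnot)⟩
  · -- negative case
    set i := (-y).toNat with hi
    have hxi : (i:ℤ) = -y := Int.toNat_of_nonneg (by omega)
    have hi0 : i ≠ 0 := by omega
    have hin : i < n := by
      have := (mem_pmn.1 hxP).2.1
      omega
    have hdl : dlead γ i = negP (γ y, γ x) := by
      rw [dlead, if_neg hi0, hxi, show -y + 1 = -x by omega, negP]
      have e1 : γ (-x) = -(γ x) := hγ.1 x
      have e2 : γ (-y) = -(γ y) := hγ.1 y
      simp only [e1, e2]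
    have hdesc : DescentB γ i := by
      rw [DescentB, if_neg hi0, hxi, show -y + 1 = -x by omega, hγ.1 x, hγ.1 y]
      omega
    refine ⟨i, hin, hdesc, finish i hin hdesc ?_⟩
    rw [hdl]
    intro hmemu
    exact hnot (negP_negP (γ y, γ x) ▸ negP_mem_inv hu hmemu)
  · -- i = 0 case
    have hin : 0 < n := by
      have := (mem_pmn.1 hyP).2.2
      omega
    have hdl : dlead γ 0 = (γ y, γ x) := by
      rw [dlead, if_pos rfl, hxm, hy1, hγ.1 1]
    have hdesc : DescentB γ 0 := by
      rw [DescentB, if_pos rfl]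
      rw [hxm, hy1] at hltv
      rw [hγ.1 1] at hltv
      omega
    exact ⟨0, hin, hdesc, finish 0 hin hdesc (by rw [hdl]; exact hnot)⟩

lemma sB_inj {i j : ℕ} (h : sB i = sB j) : i = j := by
  by_contra hne
  rcases Nat.eq_zero_or_pos i with rfl | hip <;> rcases Nat.eq_zero_or_pos j with rfl | hjp
  · exact hne rfl
  · have h1 : sB 0 1 = sB j 1 := by rw [h]
    have hj1 : (1:ℤ) ≤ (j:ℤ) := by exact_mod_cast hjp
    rw [sB0_apply, sB_apply hjp] at h1
    split_ifs at h1 <;> omega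
  · have h1 : sB i 1 = sB 0 1 := by rw [h]
    have hi1 : (1:ℤ) ≤ (i:ℤ) := by exact_mod_cast hip
    rw [sB0_apply, sB_apply hip] at h1
    split_ifs at h1 <;> omega
  · have h1 : sB i (i:ℤ) = sB j (i:ℤ) := by rw [h]
    have hi1 : (1:ℤ) ≤ (i:ℤ) := by exact_mod_cast hip
    have hj1 : (1:ℤ) ≤ (j:ℤ) := by exact_mod_cast hjp
    have hij : (i:ℤ) ≠ (j:ℤ) := by exact_mod_cast hne
    rw [sB_apply hip, sB_apply hjp] at h1
    split_ifs at h1 <;> omega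

lemma bullet1 {n : ℕ} {γ : Perm ℤ} (hγ : SignedPerm n γ) :
    JoinIrrB n γ ↔ ∃! i : ℕ, i < n ∧ DescentB γ i := by
  constructor
  · rintro ⟨u, hu, huniq⟩
    obtain ⟨i, hi, hd, rfl⟩ := cov_to_descent hγ hu
    refine ⟨i, ⟨hi, hd⟩, ?_⟩
    rintro j ⟨hj, hdj⟩
    have := huniq (γ * sB j) (cov_of_descent hγ hj hdj)
    exact sB_inj (mul_left_cancel this)
  · rintro ⟨i, ⟨hi, hd⟩, huniq⟩
    refine ⟨γ * sB i, cov_of_descent hγ hi hd, fun u hu => ?_⟩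
    obtain ⟨j, hj, hdj, rfl⟩ := cov_to_descent hγ hu
    rw [huniq j ⟨hj, hdj⟩]

end cover
section mono
open Equiv

lemma mono_int {γ : Perm ℤ} {l r : ℤ} (h : ∀ x : ℤ, l ≤ x → x < r → γ x < γ (x+1)) :
    ∀ x y : ℤ, l ≤ x → x < y → y ≤ r → γ x < γ y := by
  have key : ∀ d : ℕ, ∀ x y : ℤ, l ≤ x → y = x + (d:ℤ) + 1 → y ≤ r → γ x < γ y := by
    intro d
    induction d with
    | zero =>
      intro x y hx hy hyr
      have : y = x + 1 := by push_cast at hy; omega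
      subst this
      exact h x hx (by omega)
    | succ d ih =>
      intro x y hx hy hyr
      have h1 : γ x < γ (x + (d:ℤ) + 1) := ih x _ hx rfl (by push_cast at hy ⊢; omega)
      have h2 : γ (x + (d:ℤ) + 1) < γ (x + (d:ℤ) + 1 + 1) :=
        h _ (by omega) (by push_cast at hy; omega)
      have h3 : y = x + (d:ℤ) + 1 + 1 := by push_cast at hy ⊢; omega
      rw [h3]
      exact h1.trans h2
  intro x y hx hxy hyr
  exact key (y - x - 1).toNat x y hx (by rw [Int.toNat_of_nonneg (by omega)]; ring) hyr

/-- at a non-descent position, γ ascends -/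
lemma asc_of_not_descent {n : ℕ} {γ : Perm ℤ} {j : ℕ} (hj1 : 1 ≤ j) (hjn : j < n)
    (h : ¬ DescentB γ j) : γ (j:ℤ) < γ ((j:ℤ)+1) := by
  rw [DescentB, if_neg (by omega : j ≠ 0)] at h
  have hne : γ ((j:ℤ)+1) ≠ γ (j:ℤ) := fun hc => by
    have := γ.injective hc; omega
  omega

/-- γ with unique descent at i is increasing on the int interval (i, n] -/
lemma mono_block2 {n : ℕ} {γ : Perm ℤ} {i : ℕ} (hi : i < n)
    (huniq : ∀ j : ℕ, j < n → DescentB γ j → j = i) :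
    ∀ x y : ℤ, (i:ℤ) + 1 ≤ x → x < y → y ≤ (n:ℤ) → γ x < γ y := by
  apply mono_int
  intro x hx hxr
  have hx0 : 0 ≤ x := by omega
  set j := x.toNat with hj
  have hxj : (j:ℤ) = x := Int.toNat_of_nonneg hx0
  have hj1 : 1 ≤ j := by omega
  have hjn : j < n := by omega
  have hji : j ≠ i := by omega
  have hnd : ¬ DescentB γ j := fun hd => hji (huniq j hjn hd)
  have := asc_of_not_descent hj1 hjn hnd
  rwa [hxj] at this

/-- γ with unique descent at i is increasing on the int interval [1, i] -/
lemma mono_block1 {n : ℕ} {γ : Perm ℤ} {i : ℕ} (hi : i < n)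
    (huniq : ∀ j : ℕ, j < n → DescentB γ j → j = i) :
    ∀ x y : ℤ, 1 ≤ x → x < y → y ≤ (i:ℤ) → γ x < γ y := by
  apply mono_int
  intro x hx hxr
  have hx0 : 0 ≤ x := by omega
  set j := x.toNat with hj
  have hxj : (j:ℤ) = x := Int.toNat_of_nonneg hx0
  have hj1 : 1 ≤ j := by omega
  have hjn : j < n := by omega
  have hji : j ≠ i := by omega
  have hnd : ¬ DescentB γ j := fun hd => hji (huniq j hjn hd)
  have := asc_of_not_descent hj1 hjn hnd
  rwa [hxj] at this

lemma gamma1_pos {n : ℕ} {γ : Perm ℤ} {i : ℕ} (hγ : SignedPerm n γ) (hi : i < n)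
    (hipos : 1 ≤ i) (huniq : ∀ j : ℕ, j < n → DescentB γ j → j = i) : 0 < γ 1 := by
  have hnd : ¬ DescentB γ 0 := fun hd => by
    have := huniq 0 (by omega) hd; omega
  rw [DescentB, if_pos rfl] at hnd
  have hne : γ 1 ≠ 0 := by
    intro hc
    have : γ 1 = γ 0 := by rw [hc, sp_zero hγ]
    have := γ.injective this
    omega
  omega

end mono

section bullet2
open Equiv

/-- the image set A for γ with descent at i -/
lemma descent_set_facts {n : ℕ} {γ : Perm ℤ} {i : ℕ} (hγ : SignedPerm n γ) (hi : i < n)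
    (hd : DescentB γ i) (huniq : ∀ j : ℕ, j < n → DescentB γ j → j = i) :
    SignedSubset n ((Finset.Ioc (i : ℤ) (n : ℤ)).image ⇑γ) ∧
    ((Finset.Ioc (i : ℤ) (n : ℤ)).image ⇑γ).Nonempty ∧
    mBs ((Finset.Ioc (i : ℤ) (n : ℤ)).image ⇑γ) <
      MBs n ((Finset.Ioc (i : ℤ) (n : ℤ)).image ⇑γ) := by
  set A := (Finset.Ioc (i : ℤ) (n : ℤ)).image ⇑γ with hA
  have hmemA : ∀ a : ℤ, a ∈ A ↔ ∃ x : ℤ, (i:ℤ) < x ∧ x ≤ (n:ℤ) ∧ γ x = a := by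
    intro a
    simp [hA, Finset.mem_image, Finset.mem_Ioc, and_assoc]
  have hin : (i:ℤ) + 1 ∈ Finset.Ioc (i:ℤ) (n:ℤ) := by
    rw [Finset.mem_Ioc]
    constructor <;> omega
  have hne : A.Nonempty := ⟨γ ((i:ℤ)+1), Finset.mem_image_of_mem _ hin⟩
  have hsub : A ⊆ pmn n := by
    intro a ha
    rw [hmemA] at ha
    obtain ⟨x, hx1, hx2, rfl⟩ := ha
    exact sp_maps hγ (mem_pmn.2 ⟨by omega, by omega, by omega⟩)
  have hsigned : SignedSubset n A := by
    refine ⟨hsub, ?_⟩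
    intro a ha hna
    rw [hmemA] at ha hna
    obtain ⟨x, hx1, hx2, rfl⟩ := ha
    obtain ⟨y, hy1, hy2, hy3⟩ := hna
    have : γ y = γ (-x) := by rw [hγ.1 x, hy3]
    have := γ.injective this
    omega
  -- min of A
  have hminA : A.min = ((γ ((i:ℤ)+1) : ℤ) : WithTop ℤ) := by
    rw [← Finset.coe_min' hne]
    congr 1
    apply le_antisymm
    · exact Finset.min'_le A _ (Finset.mem_image_of_mem _ hin)
    · apply Finset.le_min'
      intro a ha
      rw [hmemA] at ha
      obtain ⟨x, hx1, hx2, rfl⟩ := ha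
      rcases eq_or_lt_of_le (by omega : (i:ℤ) + 1 ≤ x) with rfl | hlt
      · exact le_refl _
      · exact le_of_lt (mono_block2 hi huniq _ _ (le_refl _) hlt hx2)
  have hmBs : mBs A = γ ((i:ℤ)+1) := by
    rw [mBs, hminA, WithTop.untopD_coe]
  have hcard : A.card = (((n:ℤ) - (i:ℤ)).toNat) := by
    rw [hA, Finset.card_image_of_injective _ γ.injective, Int.card_Ioc]
  refine ⟨hsigned, hne, ?_⟩
  rcases Nat.eq_zero_or_pos i with rfl | hipos
  · -- i = 0 : |A| = n, M = -m
    have hc : A.card = n := by rw [hcard]; omega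
    rw [MBs, if_pos hc, hmBs]
    have hd0 : γ 1 < 0 := by
      rw [DescentB, if_pos rfl] at hd
      exact hd
    have : γ ((0:ℕ):ℤ) = γ 0 := rfl
    norm_num
    omega
  · -- i ≥ 1
    have hc : A.card ≠ n := by rw [hcard]; omega
    rw [MBs, if_neg hc, hmBs]
    set B := pmn n \ (A ∪ A.image (fun a => -a)) with hB
    have hgi : γ (i:ℤ) ∈ B := by
      rw [hB, Finset.mem_sdiff, Finset.mem_union]
      refine ⟨sp_maps hγ (mem_pmn.2 ⟨by omega, by omega, by omega⟩), ?_⟩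
      push_neg
      constructor
      · intro hmem
        rw [hmemA] at hmem
        obtain ⟨x, hx1, hx2, hx3⟩ := hmem
        have := γ.injective hx3
        omega
      · intro hmem
        rw [Finset.mem_image] at hmem
        obtain ⟨a, ha, hna⟩ := hmem
        rw [hmemA] at ha
        obtain ⟨x, hx1, hx2, rfl⟩ := ha
        have : γ (-x) = γ (i:ℤ) := by rw [hγ.1 x, hna]
        have := γ.injective this
        omega
    have hBne : B.Nonempty := ⟨_, hgi⟩
    have hmax : γ (i:ℤ) ≤ B.max.unbotD 0 := by
      rw [← Finset.coe_max' hBne, WithBot.unbotD_coe]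
      exact Finset.le_max' _ _ hgi
    have hdesc : γ ((i:ℤ)+1) < γ (i:ℤ) := by
      rw [DescentB, if_neg (by omega : i ≠ 0)] at hd
      exact hd
    omega

end bullet2
section nth
open Equiv

def nthF (S : Finset ℤ) (r : ℕ) : ℤ := (S.sort (· ≤ ·)).getD r 0

lemma nthF_mem {S : Finset ℤ} {r : ℕ} (h : r < S.card) : nthF S r ∈ S := by
  have hl : r < (S.sort (· ≤ ·)).length := by rw [Finset.length_sort]; exact h
  rw [nthF, List.getD_eq_getElem _ _ hl]
  exact (Finset.mem_sort _).1 (List.getElem_mem _)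

lemma nthF_lt {S : Finset ℤ} {r s : ℕ} (hrs : r < s) (h : s < S.card) :
    nthF S r < nthF S s := by
  have hl : s < (S.sort (· ≤ ·)).length := by rw [Finset.length_sort]; exact h
  have hr : r < (S.sort (· ≤ ·)).length := by omega
  rw [nthF, nthF, List.getD_eq_getElem _ _ hl, List.getD_eq_getElem _ _ hr]
  exact (Finset.sortedLT_sort S).getElem_lt_getElem_iff.2 hrs

lemma nthF_surj {S : Finset ℤ} {a : ℤ} (ha : a ∈ S) : ∃ r : ℕ, r < S.card ∧ nthF S r = a := by
  have : a ∈ S.sort (· ≤ ·) := (Finset.mem_sort _).2 ha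
  obtain ⟨⟨r, hr⟩, hget⟩ := List.mem_iff_get.1 this
  refine ⟨r, by rw [← Finset.length_sort (α := ℤ) (· ≤ ·)]; exact hr, ?_⟩
  rw [nthF, List.getD_eq_getElem _ _ hr]
  exact hget

lemma nthF_inj {S : Finset ℤ} {r s : ℕ} (hr : r < S.card) (hs : s < S.card)
    (h : nthF S r = nthF S s) : r = s := by
  rcases lt_trichotomy r s with hc | hc | hc
  · exact absurd h (ne_of_lt (nthF_lt hc hs))
  · exact hc
  · exact absurd h.symm (ne_of_lt (nthF_lt hc hr))

def posf (i : ℕ) (C A : Finset ℤ) (j : ℤ) : ℤ :=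
  if 1 ≤ j ∧ j ≤ (i:ℤ) then nthF C (j-1).toNat
  else if (i:ℤ) < j ∧ j ≤ (i:ℤ) + A.card then nthF A (j - (i:ℤ) - 1).toNat
  else j

def bfun (i : ℕ) (C A : Finset ℤ) (j : ℤ) : ℤ :=
  if 0 < j then posf i C A j else if j < 0 then -(posf i C A (-j)) else 0

lemma construct {n : ℕ} (A C : Finset ℤ)
    (hApmn : A ⊆ pmn n) (hAsf : ∀ a ∈ A, -a ∉ A)
    (hCpmn : C ⊆ pmn n) (hCpos : ∀ c ∈ C, 0 < c)
    (hCA : ∀ c ∈ C, c ∉ A) (hCnA : ∀ c ∈ C, -c ∉ A)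
    (hcard : C.card + A.card = n)
    (hcover : ∀ z ∈ pmn n, z ∈ C ∨ z ∈ A ∨ -z ∈ C ∨ -z ∈ A) :
    ∃ γ : Equiv.Perm ℤ, SignedPerm n γ ∧
      (∀ j : ℤ, 1 ≤ j → j ≤ (C.card:ℤ) → γ j = nthF C (j-1).toNat) ∧
      (∀ j : ℤ, (C.card:ℤ) < j → j ≤ (n:ℤ) → γ j = nthF A (j - C.card - 1).toNat) := by
  set i := C.card with hiC
  have hin : (i:ℤ) + (A.card:ℤ) = (n:ℤ) := by exact_mod_cast hcard
  set f := bfun i C A with hf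
  -- basic branch evaluation
  have hposf1 : ∀ j : ℤ, 1 ≤ j → j ≤ (i:ℤ) → posf i C A j = nthF C (j-1).toNat := by
    intro j h1 h2; rw [posf, if_pos ⟨h1, h2⟩]
  have hposf2 : ∀ j : ℤ, (i:ℤ) < j → j ≤ (n:ℤ) → posf i C A j = nthF A (j - (i:ℤ) - 1).toNat := by
    intro j h1 h2
    rw [posf, if_neg (by omega), if_pos ⟨h1, by omega⟩]
  have hposf3 : ∀ j : ℤ, (n:ℤ) < j → posf i C A j = j := by
    intro j h1
    rw [posf, if_neg (by omega), if_neg (by omega)]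
  have hmem1 : ∀ j : ℤ, 1 ≤ j → j ≤ (i:ℤ) → posf i C A j ∈ C := by
    intro j h1 h2
    rw [hposf1 j h1 h2]
    exact nthF_mem (by omega)
  have hmem2 : ∀ j : ℤ, (i:ℤ) < j → j ≤ (n:ℤ) → posf i C A j ∈ A := by
    intro j h1 h2
    rw [hposf2 j h1 h2]
    exact nthF_mem (by omega)
  have hmemT : ∀ j : ℤ, 1 ≤ j → j ≤ (n:ℤ) → posf i C A j ∈ C ∪ A := by
    intro j h1 h2
    rcases le_or_gt j (i:ℤ) with h | h
    · exact Finset.mem_union_left _ (hmem1 j h1 h)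
    · exact Finset.mem_union_right _ (hmem2 j h h2)
  have hTpmn : ∀ t ∈ C ∪ A, t ∈ pmn n := by
    intro t ht
    rcases Finset.mem_union.1 ht with h | h
    · exact hCpmn h
    · exact hApmn h
  have hTsf : ∀ t ∈ C ∪ A, -t ∉ C ∪ A := by
    intro t ht hnt
    rcases Finset.mem_union.1 ht with h | h <;> rcases Finset.mem_union.1 hnt with h2 | h2
    · have := hCpos t h; have := hCpos (-t) h2; omega
    · exact hCnA t h h2
    · exact hCnA (-t) h2 (by simpa using h)
    · exact hAsf t h h2
  -- injectivity of posf on positives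
  have hpinj : ∀ x y : ℤ, 1 ≤ x → 1 ≤ y → posf i C A x = posf i C A y → x = y := by
    intro x y hx hy hxy
    rcases le_or_gt x (i:ℤ) with hx2 | hx2 <;> rcases le_or_gt y (i:ℤ) with hy2 | hy2
    · rw [hposf1 x hx hx2, hposf1 y hy hy2] at hxy
      have := nthF_inj (by omega) (by omega) hxy
      omega
    · rcases le_or_gt y (n:ℤ) with hy3 | hy3
      · exact absurd hxy (by
          have h1 := hmem1 x hx hx2
          have h2 := hmem2 y hy2 hy3
          intro hc; exact hCA _ h1 (hc ▸ h2))
      · rw [hposf3 y hy3] at hxy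
        have := mem_pmn.1 (hCpmn (hmem1 x hx hx2))
        omega
    · rcases le_or_gt x (n:ℤ) with hx3 | hx3
      · exact absurd hxy.symm (by
          have h1 := hmem1 y hy hy2
          have h2 := hmem2 x hx2 hx3
          intro hc; exact hCA _ h1 (hc ▸ h2))
      · rw [hposf3 x hx3] at hxy
        have := mem_pmn.1 (hCpmn (hmem1 y hy hy2))
        omega
    · rcases le_or_gt x (n:ℤ) with hx3 | hx3 <;> rcases le_or_gt y (n:ℤ) with hy3 | hy3
      · rw [hposf2 x hx2 hx3, hposf2 y hy2 hy3] at hxy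
        have := nthF_inj (by omega) (by omega) hxy
        omega
      · rw [hposf3 y hy3] at hxy
        have := mem_pmn.1 (hApmn (hmem2 x hx2 hx3))
        omega
      · rw [hposf3 x hx3] at hxy
        have := mem_pmn.1 (hApmn (hmem2 y hy2 hy3))
        omega
      · rw [hposf3 x hx3, hposf3 y hy3] at hxy
        exact hxy
  have hpne0 : ∀ x : ℤ, 1 ≤ x → posf i C A x ≠ 0 := by
    intro x hx
    rcases le_or_gt x (n:ℤ) with h | h
    · have := mem_pmn.1 (hTpmn _ (hmemT x hx h))
      exact this.1
    · rw [hposf3 x h]; omega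
  have hclash : ∀ x y : ℤ, 1 ≤ x → 1 ≤ y → posf i C A x ≠ -(posf i C A y) := by
    intro x y hx hy hc
    rcases le_or_gt x (n:ℤ) with h1 | h1 <;> rcases le_or_gt y (n:ℤ) with h2 | h2
    · have t1 := hmemT x hx h1
      have t2 := hmemT y hy h2
      apply hTsf _ t2
      rw [hc] at t1
      exact t1
    · rw [hposf3 y h2] at hc
      have := mem_pmn.1 (hTpmn _ (hmemT x hx h1))
      omega
    · rw [hposf3 x h1] at hc
      have := mem_pmn.1 (hTpmn _ (hmemT y hy h2))
      omega
    · rw [hposf3 x h1, hposf3 y h2] at hc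
      omega
  -- f is odd
  have hodd : ∀ x : ℤ, f (-x) = -f x := by
    intro x
    simp only [hf, bfun, neg_neg]
    split_ifs <;> omega
  have hfval : ∀ x : ℤ, 0 < x → f x = posf i C A x := by
    intro x hx; simp only [hf, bfun, if_pos hx]
  have hfvalneg : ∀ x : ℤ, x < 0 → f x = -(posf i C A (-x)) := by
    intro x hx; simp only [hf, bfun, if_neg (by omega : ¬ 0 < x), if_pos hx]
  have hf0 : f 0 = 0 := by simp [hf, bfun]
  -- injective
  have hinj : Function.Injective f := by
    intro x y hxy
    rcases lt_trichotomy 0 x with hx | hx | hx <;> rcases lt_trichotomy 0 y with hy | hy | hy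
    · rw [hfval x hx, hfval y hy] at hxy
      exact hpinj x y (by omega) (by omega) hxy
    · rw [hfval x hx, ← hy, hf0] at hxy
      exact absurd hxy (hpne0 x (by omega))
    · rw [hfval x hx, hfvalneg y hy] at hxy
      exact absurd hxy (hclash x (-y) (by omega) (by omega))
    · rw [← hx, hf0, hfval y hy] at hxy
      exact absurd hxy.symm (hpne0 y (by omega))
    · omega
    · rw [← hx, hf0, hfvalneg y hy] at hxy
      have := hpne0 (-y) (by omega)
      omega
    · rw [hfvalneg x hx, hfval y hy] at hxy
      have := hclash y (-x) (by omega) (by omega)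
      omega
    · rw [hfvalneg x hx, ← hy, hf0] at hxy
      have := hpne0 (-x) (by omega)
      omega
    · rw [hfvalneg x hx, hfvalneg y hy] at hxy
      have := hpinj (-x) (-y) (by omega) (by omega) (by omega)
      omega
  have hfix : ∀ x : ℤ, (n:ℤ) < |x| → f x = x := by
    intro x hx
    rcases abs_cases x with ⟨he, _⟩ | ⟨he, _⟩
    · rw [hfval x (by omega), hposf3 x (by omega)]
    · rw [hfvalneg x (by omega), hposf3 (-x) (by omega)]
      omega
  -- surjective
  have hsurj : Function.Surjective f := by
    intro z
    by_cases hz0 : z = 0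
    · exact ⟨0, by rw [hf0, hz0]⟩
    by_cases hzn : (n:ℤ) < |z|
    · exact ⟨z, hfix z hzn⟩
    have hzp : z ∈ pmn n := mem_pmn.2 ⟨hz0, by rcases abs_cases z with ⟨he,_⟩|⟨he,_⟩ <;> omega,
      by rcases abs_cases z with ⟨he,_⟩|⟨he,_⟩ <;> omega⟩
    rcases hcover z hzp with h | h | h | h
    · obtain ⟨r, hr, hre⟩ := nthF_surj h
      refine ⟨(r:ℤ) + 1, ?_⟩
      rw [hfval _ (by omega), hposf1 _ (by omega) (by omega)]
      rw [show ((r:ℤ) + 1 - 1).toNat = r by omega]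
      exact hre
    · obtain ⟨r, hr, hre⟩ := nthF_surj h
      refine ⟨(i:ℤ) + (r:ℤ) + 1, ?_⟩
      rw [hfval _ (by omega), hposf2 _ (by omega) (by omega)]
      rw [show ((i:ℤ) + (r:ℤ) + 1 - (i:ℤ) - 1).toNat = r by omega]
      exact hre
    · obtain ⟨r, hr, hre⟩ := nthF_surj h
      refine ⟨-((r:ℤ) + 1), ?_⟩
      rw [hfvalneg _ (by omega), neg_neg, hposf1 _ (by omega) (by omega)]
      rw [show ((r:ℤ) + 1 - 1).toNat = r by omega, hre]
      omega
    · obtain ⟨r, hr, hre⟩ := nthF_surj h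
      refine ⟨-((i:ℤ) + (r:ℤ) + 1), ?_⟩
      rw [hfvalneg _ (by omega), neg_neg, hposf2 _ (by omega) (by omega)]
      rw [show ((i:ℤ) + (r:ℤ) + 1 - (i:ℤ) - 1).toNat = r by omega, hre]
      omega
  refine ⟨Equiv.ofBijective f ⟨hinj, hsurj⟩, ⟨fun x => hodd x, fun x hx => hfix x hx⟩, ?_, ?_⟩
  · intro j h1 h2
    show f j = _
    rw [hfval j (by omega), hposf1 j h1 h2]
  · intro j h1 h2
    show f j = _
    rw [hfval j (by omega), hposf2 j h1 h2]

end nth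
section helpers
open Equiv

lemma nthF_zero_le {S : Finset ℤ} {a : ℤ} (ha : a ∈ S) : nthF S 0 ≤ a := by
  obtain ⟨r, hr, rfl⟩ := nthF_surj ha
  rcases Nat.eq_zero_or_pos r with rfl | hpos
  · exact le_refl _
  · exact le_of_lt (nthF_lt hpos hr)

lemma nthF_le_last {S : Finset ℤ} {a : ℤ} (ha : a ∈ S) : a ≤ nthF S (S.card - 1) := by
  obtain ⟨r, hr, rfl⟩ := nthF_surj ha
  rcases Nat.lt_or_ge r (S.card - 1) with hlt | hge
  · exact le_of_lt (nthF_lt hlt (by omega))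
  · have : r = S.card - 1 := by omega
    rw [this]

lemma card_pmn (n : ℕ) : (pmn n).card = 2 * n := by
  rw [pmn, Finset.card_erase_of_mem (by rw [Finset.mem_Icc]; omega), Int.card_Icc]
  omega

lemma mBs_eq_nthF {A : Finset ℤ} (hne : A.Nonempty) : mBs A = nthF A 0 := by
  have h0 : 0 < A.card := Finset.card_pos.2 hne
  have hmem : nthF A 0 ∈ A := nthF_mem h0
  have : A.min = ((nthF A 0 : ℤ) : WithTop ℤ) := by
    rw [← Finset.coe_min' hne]
    congr 1
    exact le_antisymm (Finset.min'_le _ _ hmem) (Finset.le_min' _ _ _ fun a ha => nthF_zero_le ha)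
  rw [mBs, this, WithTop.untopD_coe]

lemma Ioc_eq_Icc (a b : ℤ) : Finset.Ioc a b = Finset.Icc (a+1) b := by
  ext z
  rw [Finset.mem_Ioc, Finset.mem_Icc]
  omega

/-- two functions strictly increasing on [l, r] with equal image are equal there -/
lemma eq_on_mono {γ γ' : Perm ℤ} {l r : ℤ}
    (h1 : ∀ x y : ℤ, l ≤ x → x < y → y ≤ r → γ x < γ y)
    (h2 : ∀ x y : ℤ, l ≤ x → x < y → y ≤ r → γ' x < γ' y)
    (himg : (Finset.Icc l r).image ⇑γ = (Finset.Icc l r).image ⇑γ') :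
    ∀ x : ℤ, l ≤ x → x ≤ r → γ x = γ' x := by
  intro x hlx hxr
  set S := (Finset.Icc l r).image ⇑γ with hS
  have key : ∀ (g : Perm ℤ), (∀ x y : ℤ, l ≤ x → x < y → y ≤ r → g x < g y) →
      (Finset.Icc l r).image ⇑g = S →
      S.filter (· < g x) = (Finset.Icc l (x-1)).image ⇑g := by
    intro g hg hgS
    ext z
    rw [Finset.mem_filter, ← hgS, Finset.mem_image]
    constructor
    · rintro ⟨⟨y, hy, rfl⟩, hlt⟩
      rw [Finset.mem_Icc] at hy
      rw [Finset.mem_image]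
      refine ⟨y, Finset.mem_Icc.2 ⟨hy.1, ?_⟩, rfl⟩
      by_contra hc
      push_neg at hc
      rcases eq_or_lt_of_le (by omega : x ≤ y) with rfl | hxy
      · omega
      · exact absurd hlt (not_lt.2 (le_of_lt (hg x y hlx hxy hy.2)))
    · rw [Finset.mem_image]
      rintro ⟨y, hy, rfl⟩
      rw [Finset.mem_Icc] at hy
      exact ⟨⟨y, Finset.mem_Icc.2 ⟨hy.1, by omega⟩, rfl⟩, hg y x hy.1 (by omega) hxr⟩
  have hx1 : γ x ∈ S := Finset.mem_image_of_mem _ (Finset.mem_Icc.2 ⟨hlx, hxr⟩)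
  have hx2 : γ' x ∈ S := by
    rw [himg]
    exact Finset.mem_image_of_mem _ (Finset.mem_Icc.2 ⟨hlx, hxr⟩)
  apply rnk_inj hx1 hx2
  unfold rnk
  rw [key γ h1 hS.symm, key γ' h2 himg.symm]
  rw [Finset.card_image_of_injective _ γ.injective, Finset.card_image_of_injective _ γ'.injective]

end helpers
section bullet3
open Equiv

lemma bullet3 {n : ℕ} {A : Finset ℤ} (hSS : SignedSubset n A) (hne : A.Nonempty)
    (hmM : mBs A < MBs n A) :
    ∃! γ : Perm ℤ, SignedPerm n γ ∧ JoinIrrB n γ ∧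
      ∃ i : ℕ, i < n ∧ DescentB γ i ∧ A = (Finset.Ioc (i:ℤ) (n:ℤ)).image ⇑γ := by
  obtain ⟨hApmn, hAsf⟩ := hSS
  have hk1 : 1 ≤ A.card := Finset.card_pos.2 hne
  set k := A.card with hk
  set D := pmn n \ (A ∪ A.image (fun a => -a)) with hD
  set C := D.filter (0 < ·) with hC
  have himg_sub : A.image (fun a => -a) ⊆ pmn n := by
    intro z hz
    obtain ⟨a, ha, rfl⟩ := Finset.mem_image.1 hz
    exact neg_mem_pmn (hApmn ha)
  have hunion_sub : A ∪ A.image (fun a => -a) ⊆ pmn n := Finset.union_subset hApmn himg_sub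
  have hdisj : Disjoint A (A.image (fun a => -a)) := by
    rw [Finset.disjoint_left]
    intro a ha hmem
    obtain ⟨b, hb, hab⟩ := Finset.mem_image.1 hmem
    exact hAsf b hb (hab.symm ▸ ha)
  have hcard_union : (A ∪ A.image (fun a => -a)).card = 2 * k := by
    rw [Finset.card_union_of_disjoint hdisj, Finset.card_image_of_injective _ neg_injective]
    omega
  have hDcard : D.card + 2 * k = 2 * n := by
    rw [hD, Finset.card_sdiff_of_subset hunion_sub]
    have h1 := Finset.card_le_card hunion_sub
    rw [card_pmn] at h1 ⊢
    omega
  have hsymU : ∀ z : ℤ, z ∈ A ∪ A.image (fun a => -a) → -z ∈ A ∪ A.image (fun a => -a) := by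
    intro z hz
    rcases Finset.mem_union.1 hz with h | h
    · exact Finset.mem_union_right _ (Finset.mem_image.2 ⟨z, h, rfl⟩)
    · obtain ⟨a, ha, rfl⟩ := Finset.mem_image.1 h
      simp only [neg_neg]
      exact Finset.mem_union_left _ ha
  have hDsym : ∀ z : ℤ, z ∈ D → -z ∈ D := by
    intro z hz
    rw [hD, Finset.mem_sdiff] at hz ⊢
    refine ⟨neg_mem_pmn hz.1, fun hmem => hz.2 ?_⟩
    have := hsymU _ hmem
    simpa using this
  have h0D : (0:ℤ) ∉ D := fun h => (mem_pmn.1 (Finset.mem_sdiff.1 h).1).1 rfl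
  have hCcard2 : 2 * C.card = D.card := by
    have hpart : C.card + (D.filter (fun z => ¬ 0 < z)).card = D.card := by
      rw [hC]
      exact Finset.card_filter_add_card_filter_not _
    have himg : D.filter (fun z => ¬ 0 < z) = C.image (fun a => -a) := by
      ext z
      simp only [Finset.mem_filter, Finset.mem_image, hC]
      constructor
      · rintro ⟨hzD, hz⟩
        have hz0 : z ≠ 0 := fun h => h0D (h ▸ hzD)
        exact ⟨-z, ⟨hDsym z hzD, by omega⟩, by omega⟩
      · rintro ⟨a, ⟨haD, hapos⟩, rfl⟩
        exact ⟨hDsym a haD, by omega⟩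
    rw [himg, Finset.card_image_of_injective _ neg_injective] at hpart
    omega
  have hCk : C.card + A.card = n := by omega
  have hCpmn : C ⊆ pmn n := fun c hc => (Finset.mem_sdiff.1 (Finset.mem_filter.1 hc).1).1
  have hCpos : ∀ c ∈ C, 0 < c := fun c hc => (Finset.mem_filter.1 hc).2
  have hCA : ∀ c ∈ C, c ∉ A := fun c hc ha =>
    (Finset.mem_sdiff.1 (Finset.mem_filter.1 hc).1).2 (Finset.mem_union_left _ ha)
  have hCnA : ∀ c ∈ C, -c ∉ A := fun c hc ha =>
    (Finset.mem_sdiff.1 (Finset.mem_filter.1 hc).1).2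
      (Finset.mem_union_right _ (Finset.mem_image.2 ⟨-c, ha, neg_neg c⟩))
  have hcover : ∀ z ∈ pmn n, z ∈ C ∨ z ∈ A ∨ -z ∈ C ∨ -z ∈ A := by
    intro z hz
    by_cases hzA : z ∈ A
    · exact Or.inr (Or.inl hzA)
    by_cases hznA : -z ∈ A
    · exact Or.inr (Or.inr (Or.inr hznA))
    have hzD : z ∈ D := by
      rw [hD, Finset.mem_sdiff]
      refine ⟨hz, fun hmem => ?_⟩
      rcases Finset.mem_union.1 hmem with h | h
      · exact hzA h
      · obtain ⟨a, ha, hae⟩ := Finset.mem_image.1 h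
        exact hznA (by rw [show -z = a by omega]; exact ha)
    have hz0 : z ≠ 0 := (mem_pmn.1 hz).1
    rcases lt_or_gt_of_ne hz0 with hneg | hpos
    · exact Or.inr (Or.inr (Or.inl (Finset.mem_filter.2 ⟨hDsym z hzD, by omega⟩)))
    · exact Or.inl (Finset.mem_filter.2 ⟨hzD, hpos⟩)
  obtain ⟨γ, hγsp, hev1, hev2⟩ := construct A C hApmn hAsf hCpmn hCpos hCA hCnA hCk hcover
  set iN := C.card with hiN
  have hiNn : iN < n := by omega
  have hvC : ∀ j : ℕ, 1 ≤ j → j ≤ iN → γ (j:ℤ) = nthF C (j-1) := by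
    intro j h1 h2
    rw [hev1 (j:ℤ) (by exact_mod_cast h1) (by exact_mod_cast h2)]
    congr 1
    omega
  have hvA : ∀ j : ℕ, iN < j → j ≤ n → γ (j:ℤ) = nthF A (j - iN - 1) := by
    intro j h1 h2
    rw [hev2 (j:ℤ) (by exact_mod_cast h1) (by exact_mod_cast h2)]
    congr 1
    omega
  have hm : mBs A = nthF A 0 := mBs_eq_nthF hne
  -- the descent at iN
  have hdesc : DescentB γ iN := by
    rcases Nat.eq_zero_or_pos iN with h0 | hpos
    · rw [h0, DescentB, if_pos rfl]
      have hkn : A.card = n := by omega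
      rw [MBs, if_pos hkn] at hmM
      have e1 : γ ((1:ℕ):ℤ) = nthF A (1 - iN - 1) := hvA 1 (by omega) (by omega)
      rw [show ((1:ℕ):ℤ) = (1:ℤ) by norm_num, show 1 - iN - 1 = 0 by omega] at e1
      omega
    · rw [DescentB, if_neg (by omega)]
      have hkn : A.card ≠ n := by omega
      have hDne : D.Nonempty := by
        have : nthF C 0 ∈ C := nthF_mem (by omega)
        exact ⟨nthF C 0, (Finset.mem_filter.1 this).1⟩
      have hMv : MBs n A = D.max' hDne := by
        rw [MBs, if_neg hkn, ← hD, ← Finset.coe_max' hDne, WithBot.unbotD_coe]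
      have hMvD : D.max' hDne ∈ D := Finset.max'_mem _ _
      have hMvpos : 0 < D.max' hDne := by
        have h1 := Finset.le_max' _ _ (hDsym _ hMvD)
        have h2 : D.max' hDne ≠ 0 := fun h => h0D (h ▸ hMvD)
        omega
      have hMvC : D.max' hDne ∈ C := Finset.mem_filter.2 ⟨hMvD, hMvpos⟩
      have hle := nthF_le_last hMvC
      rw [← hiN] at hle
      have e1 : γ ((iN:ℕ):ℤ) = nthF C (iN - 1) := hvC iN (by omega) le_rfl
      have e2 : γ ((iN + 1 : ℕ):ℤ) = nthF A (iN + 1 - iN - 1) := hvA (iN+1) (by omega) (by omega)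
      rw [show ((iN + 1 : ℕ):ℤ) = (iN:ℤ) + 1 by push_cast; ring,
        show iN + 1 - iN - 1 = 0 by omega] at e2
      rw [hMv] at hmM
      rw [e2, e1]
      omega
  -- no other descents
  have huniqd : ∀ j : ℕ, j < n → DescentB γ j → j = iN := by
    intro j hj hdj
    by_contra hne'
    rcases Nat.eq_zero_or_pos j with rfl | hj1
    · rw [DescentB, if_pos rfl] at hdj
      have e1 : γ ((1:ℕ):ℤ) = nthF C 0 := by
        have := hvC 1 le_rfl (by omega)
        rwa [show (1:ℕ) - 1 = 0 by omega] at this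
      have := hCpos _ (nthF_mem (show 0 < C.card by omega))
      rw [show ((1:ℕ):ℤ) = (1:ℤ) by norm_num] at e1
      omega
    · rw [DescentB, if_neg (by omega)] at hdj
      rcases lt_or_gt_of_ne hne' with hlt | hgt
      · have e1 : γ (j:ℤ) = nthF C (j-1) := hvC j hj1 (by omega)
        have e2 : γ ((j+1 : ℕ):ℤ) = nthF C j := by
          have := hvC (j+1) (by omega) (by omega)
          rwa [show j + 1 - 1 = j by omega] at this
        rw [show ((j+1:ℕ):ℤ) = (j:ℤ)+1 by push_cast; ring] at e2
        have := nthF_lt (show j-1 < j by omega) (show j < C.card by omega)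
        omega
      · have e1 : γ (j:ℤ) = nthF A (j - iN - 1) := hvA j hgt (by omega)
        have e2 : γ ((j+1 : ℕ):ℤ) = nthF A (j - iN) := by
          have := hvA (j+1) (by omega) (by omega)
          rwa [show j + 1 - iN - 1 = j - iN by omega] at this
        rw [show ((j+1:ℕ):ℤ) = (j:ℤ)+1 by push_cast; ring] at e2
        have := nthF_lt (show j - iN - 1 < j - iN by omega) (show j - iN < A.card by omega)
        omega
  have hJI : JoinIrrB n γ :=
    (bullet1 hγsp).2 ⟨iN, ⟨hiNn, hdesc⟩, fun j hj => huniqd j hj.1 hj.2⟩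
  have himgA : A = (Finset.Ioc (iN:ℤ) (n:ℤ)).image ⇑γ := by
    symm
    apply Finset.eq_of_subset_of_card_le
    · intro z hz
      obtain ⟨x, hx, rfl⟩ := Finset.mem_image.1 hz
      rw [Finset.mem_Ioc] at hx
      set j := x.toNat with hj
      have hxj : (j:ℤ) = x := Int.toNat_of_nonneg (by omega)
      have e1 : γ (j:ℤ) = nthF A (j - iN - 1) := hvA j (by omega) (by omega)
      rw [← hxj, e1]
      exact nthF_mem (by omega)
    · rw [Finset.card_image_of_injective _ γ.injective, Int.card_Ioc]
      omega
  refine ⟨γ, ⟨hγsp, hJI, iN, hiNn, hdesc, himgA⟩, ?_⟩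
  -- uniqueness
  rintro γ' ⟨hsp', hJI', i', hi', hd', hA'⟩
  have hcd : A.card = ((n:ℤ) - (i':ℤ)).toNat := by
    rw [hA', Finset.card_image_of_injective _ γ'.injective, Int.card_Ioc]
  have hii : i' = iN := by omega
  subst hii
  obtain ⟨i₀, hi₀, huq⟩ := (bullet1 hsp').1 hJI'
  have hi'0 : iN = i₀ := huq iN ⟨hi', hd'⟩
  have huniq' : ∀ j : ℕ, j < n → DescentB γ' j → j = iN := by
    intro j hj hdj
    rw [huq j ⟨hj, hdj⟩, hi'0]
  -- equality on the A block
  have himg2 : (Finset.Icc ((iN:ℤ)+1) (n:ℤ)).image ⇑γ = (Finset.Icc ((iN:ℤ)+1) (n:ℤ)).image ⇑γ' := by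
    rw [← Ioc_eq_Icc, ← himgA, hA']
  have heq2 := eq_on_mono (mono_block2 hiNn huniqd) (mono_block2 hi' huniq') himg2
  -- equality on the C block
  have heq1 : ∀ x : ℤ, 1 ≤ x → x ≤ (iN:ℤ) → γ x = γ' x := by
    intro x h1 h2
    have hiN1 : 1 ≤ iN := by omega
    have hIccC : (Finset.Icc (1:ℤ) (iN:ℤ)).card = iN := by
      rw [Int.card_Icc]; omega
    have himgγ : (Finset.Icc (1:ℤ) (iN:ℤ)).image ⇑γ = C := by
      apply Finset.eq_of_subset_of_card_le
      · intro z hz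
        obtain ⟨y, hy, rfl⟩ := Finset.mem_image.1 hz
        rw [Finset.mem_Icc] at hy
        set j := y.toNat with hj
        have hxj : (j:ℤ) = y := Int.toNat_of_nonneg (by omega)
        have e1 : γ (j:ℤ) = nthF C (j - 1) := hvC j (by omega) (by omega)
        rw [← hxj, e1]
        exact nthF_mem (by omega)
      · rw [Finset.card_image_of_injective _ γ.injective, hIccC]
    have hpos1 : 0 < γ' 1 := gamma1_pos hsp' hi' hiN1 huniq'
    have himgγ' : (Finset.Icc (1:ℤ) (iN:ℤ)).image ⇑γ' = C := by
      apply Finset.eq_of_subset_of_card_le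
      · intro z hz
        obtain ⟨y, hy, rfl⟩ := Finset.mem_image.1 hz
        rw [Finset.mem_Icc] at hy
        have hzpos : 0 < γ' y := by
          rcases eq_or_lt_of_le hy.1 with rfl | hlt
          · exact hpos1
          · have := mono_block1 hi' huniq' 1 y le_rfl hlt hy.2
            omega
        have hzpmn : γ' y ∈ pmn n :=
          sp_maps hsp' (mem_pmn.2 ⟨by omega, by omega, by omega⟩)
        have hznA : γ' y ∉ A := by
          intro hmem
          rw [hA'] at hmem
          obtain ⟨w, hw, hwe⟩ := Finset.mem_image.1 hmem
          rw [Finset.mem_Ioc] at hw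
          have := γ'.injective hwe
          omega
        have hznnA : γ' y ∉ A.image (fun a => -a) := by
          intro hmem
          obtain ⟨a, ha, hae⟩ := Finset.mem_image.1 hmem
          have haA : a = γ' (-y) := by
            rw [hsp'.1 y]; omega
          rw [hA'] at ha
          rw [haA] at ha
          obtain ⟨w, hw, hwe⟩ := Finset.mem_image.1 ha
          rw [Finset.mem_Ioc] at hw
          have := γ'.injective hwe
          omega
        refine Finset.mem_filter.2 ⟨?_, hzpos⟩
        rw [hD, Finset.mem_sdiff]
        exact ⟨hzpmn, fun hmem => by
          rcases Finset.mem_union.1 hmem with h | h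
          · exact hznA h
          · exact hznnA h⟩
      · rw [Finset.card_image_of_injective _ γ'.injective, hIccC]
    exact eq_on_mono (mono_block1 hiNn huniqd) (mono_block1 hi' huniq')
      (himgγ.trans himgγ'.symm) x h1 h2
  have hposeq : ∀ x : ℤ, 1 ≤ x → x ≤ (n:ℤ) → γ' x = γ x := by
    intro x h1 h2
    rcases le_or_gt x (iN:ℤ) with h | h
    · exact (heq1 x h1 h).symm
    · exact (heq2 x (by omega) h2).symm
  apply Equiv.ext
  intro x
  rcases lt_trichotomy x 0 with hx | hx | hx
  · rcases le_or_gt (-x) (n:ℤ) with h | h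
    · have e1 : γ' x = -(γ' (-x)) := by
        have := hsp'.1 (-x)
        rw [neg_neg] at this
        omega
      have e2 : γ x = -(γ (-x)) := by
        have := hγsp.1 (-x)
        rw [neg_neg] at this
        omega
      rw [e1, e2, hposeq (-x) (by omega) h]
    · rw [hsp'.2 x (by rw [abs_of_neg hx]; omega), hγsp.2 x (by rw [abs_of_neg hx]; omega)]
  · rw [hx, sp_zero hsp', sp_zero hγsp]
  · rcases le_or_gt x (n:ℤ) with h | h
    · exact hposeq x (by omega) h
    · rw [hsp'.2 x (by rw [abs_of_pos hx]; omega), hγsp.2 x (by rw [abs_of_pos hx]; omega)]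

end bullet3

/-- A signed permutation `γ ∈ B_n` is join-irreducible in the right
weak order iff it has exactly one descent position `i ∈ {0,…,n−1}`; and
`γ ↦ A = {γ_{i+1},…,γ_n}` is a bijection between join-irreducibles of `B_n` and
nonempty signed subsets `A` of `[n]` with `M > m`. -/
theorem stmt_17 (n : ℕ) :
    (∀ γ : Equiv.Perm ℤ, SignedPerm n γ →
      (JoinIrrB n γ ↔ ∃! i : ℕ, i < n ∧ DescentB γ i)) ∧
    (∀ γ : Equiv.Perm ℤ, SignedPerm n γ → JoinIrrB n γ →
      ∃ i : ℕ, i < n ∧ DescentB γ i ∧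
        SignedSubset n ((Finset.Ioc (i : ℤ) (n : ℤ)).image ⇑γ) ∧
        ((Finset.Ioc (i : ℤ) (n : ℤ)).image ⇑γ).Nonempty ∧
        mBs ((Finset.Ioc (i : ℤ) (n : ℤ)).image ⇑γ) <
          MBs n ((Finset.Ioc (i : ℤ) (n : ℤ)).image ⇑γ)) ∧
    (∀ A : Finset ℤ, SignedSubset n A → A.Nonempty → mBs A < MBs n A →
      ∃! γ : Equiv.Perm ℤ, SignedPerm n γ ∧ JoinIrrB n γ ∧
        ∃ i : ℕ, i < n ∧ DescentB γ i ∧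
          A = (Finset.Ioc (i : ℤ) (n : ℤ)).image ⇑γ) := by
  refine ⟨fun γ hγ => bullet1 hγ, fun γ hγ hJI => ?_, fun A hSS hne hmM => bullet3 hSS hne hmM⟩
  obtain ⟨i, ⟨hi, hd⟩, huniq⟩ := (bullet1 hγ).1 hJI
  have huniq' : ∀ j : ℕ, j < n → DescentB γ j → j = i := fun j hj hdj => huniq j ⟨hj, hdj⟩
  obtain ⟨h1, h2, h3⟩ := descent_set_facts hγ hi hd huniq'
  exact ⟨i, hi, hd, h1, h2, h3⟩
end

section
/- Let L be a finite semi-distributive lattice with an anti-automorphism α, and let σ be the map sending each join-irreducible γ to the unique meet-irreducible μ with γ ∧ μ = γ∗ and γ ∨ μ = μ*. If Θ₁ is a lattice congruence contracting exactly the set C₁ of join-irreducibles, and Θ₂ is the congruence contracting exactly C₂ := α(σ(C₁)), then α maps Θ₁-classes bijectively onto Θ₂-classes, inducing an anti-isomorphism from L/Θ₁ to L/Θ₂. -/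
/-- A lattice congruence, given as a relation. -/
def IsLatCong {L : Type*} [Lattice L] (r : L → L → Prop) : Prop :=
  Equivalence r ∧ ∀ a₁ a₂ b₁ b₂ : L, r a₁ a₂ → r b₁ b₂ →
    r (a₁ ⊔ b₁) (a₂ ⊔ b₂) ∧ r (a₁ ⊓ b₁) (a₂ ⊓ b₂)

/-- A congruence `θ` contracts a join-irreducible `γ` (an element with unique lower
cover `γ∗`) if `θ γ γ∗`. -/
def Contracts {L : Type*} [Lattice L] (θ : L → L → Prop) (γ : L) : Prop :=
  ∃ γs : L, γs ⋖ γ ∧ (∀ u : L, u ⋖ γ → u = γs) ∧ θ γ γs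

section Aux
variable {L : Type*} [Lattice L] [Fintype L] {θ θ' : L → L → Prop}

lemma aux_exists_covby {x y : L} (h : x < y) : ∃ u, x ≤ u ∧ u ⋖ y := by
  classical
  obtain ⟨u, hu, hmax⟩ := (Finset.univ.filter fun u : L => x ≤ u ∧ u < y).exists_maximal
    ⟨x, by simp [h]⟩
  simp only [Finset.mem_filter, Finset.mem_univ, true_and] at hu hmax
  exact ⟨u, hu.1, hu.2, fun z hz hzy => hz.not_ge (hmax ⟨hu.1.trans hz.le, hzy⟩ hz.le)⟩

lemma aux_conv (h : IsLatCong θ) {x y u v : L} (hxy : θ x y) (hx : x ≤ u) (huv : u ≤ v)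
    (hv : v ≤ y) : θ u v := by
  have h1 := (h.2 x y u u hxy (h.1.refl u)).1
  rw [sup_eq_right.mpr hx, sup_eq_left.mpr (huv.trans hv)] at h1
  have h2 := (h.2 u y v v h1 (h.1.refl v)).2
  rwa [inf_eq_left.mpr huv, inf_eq_right.mpr hv] at h2

lemma aux_chain (h : IsLatCong θ) :
    ∀ y x : L, x ≤ y → (∀ u v, x ≤ u → u ⋖ v → v ≤ y → θ u v) → θ x y := by
  intro y
  induction y using WellFoundedLT.induction with
  | ind y ih =>
    intro x hxy hcov
    rcases eq_or_lt_of_le hxy with rfl | hlt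
    · exact h.1.refl x
    · obtain ⟨u, hxu, huy⟩ := aux_exists_covby hlt
      exact h.1.trans
        (ih u huy.lt x hxu fun a b ha hab hb => hcov a b ha hab (hb.trans huy.le))
        (hcov u y hxu huy le_rfl)

lemma aux_le_iff (h : IsLatCong θ) {x y : L} (hxy : x ≤ y) :
    θ x y ↔ ∀ u v, x ≤ u → u ⋖ v → v ≤ y → θ u v :=
  ⟨fun hθ u v hu huv hv => aux_conv h hθ hu huv.le hv, aux_chain h y x hxy⟩

lemma aux_inf_sup (h : IsLatCong θ) (a b : L) : θ a b ↔ θ (a ⊓ b) (a ⊔ b) := by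
  constructor
  · intro hab
    have h1 := (h.2 a b b b hab (h.1.refl b)).2
    have h2 := (h.2 a b b b hab (h.1.refl b)).1
    rw [inf_idem] at h1
    rw [sup_idem] at h2
    exact h.1.trans h1 (h.1.symm h2)
  · intro hab
    have ha : θ a (a ⊔ b) := aux_conv h hab inf_le_left le_sup_left le_rfl
    have hb : θ b (a ⊔ b) := aux_conv h hab inf_le_right le_sup_right le_rfl
    exact h.1.trans ha (h.1.symm hb)

lemma aux_cong_iff (h : IsLatCong θ) (h' : IsLatCong θ')
    (hcov : ∀ u v : L, u ⋖ v → (θ u v ↔ θ' u v)) (a b : L) : θ a b ↔ θ' a b := by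
  rw [aux_inf_sup h, aux_inf_sup h', aux_le_iff h inf_le_sup, aux_le_iff h' inf_le_sup]
  exact forall_congr' fun u => forall_congr' fun v => imp_congr_right fun _ =>
    imp_congr_right fun huv => imp_congr_right fun _ => hcov u v huv

/-- minimal join-irreducible under a cover -/
lemma aux_min {u v : L} (huv : u ⋖ v) :
    ∃ γ : L, γ ≤ v ∧ ¬ γ ≤ u ∧ (u ⊓ γ) ⋖ γ ∧ (∀ w, w ⋖ γ → w = u ⊓ γ) ∧ γ ⊔ u = v := by
  classical
  obtain ⟨γ, hγ, hmin⟩ := (Finset.univ.filter fun x : L => x ≤ v ∧ ¬ x ≤ u).exists_minimal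
    ⟨v, by simp [le_refl, fun h : v ≤ u => huv.lt.not_ge h]⟩
  simp only [Finset.mem_filter, Finset.mem_univ, true_and] at hγ hmin
  have hbelow : ∀ x, x < γ → x ≤ u := by
    intro x hx
    by_contra hxu
    exact hx.not_ge (hmin ⟨hx.le.trans hγ.1, hxu⟩ hx.le)
  have hlt : u ⊓ γ < γ := inf_le_right.lt_of_ne (fun e => hγ.2 (e ▸ inf_le_left))
  have hcov : (u ⊓ γ) ⋖ γ := by
    refine ⟨hlt, fun z hz hzγ => ?_⟩
    exact hz.not_ge (le_inf (hbelow z hzγ) hzγ.le)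
  refine ⟨γ, hγ.1, hγ.2, hcov, ?_, ?_⟩
  · intro w hw
    have hwle : w ≤ u ⊓ γ := le_inf (hbelow w hw.lt) hw.lt.le
    rcases eq_or_lt_of_le hwle with e | hlt'
    · exact e
    · exact absurd hlt (hw.2 hlt')
  · have h1 : u < γ ⊔ u := lt_of_le_of_ne le_sup_right
      (fun e => hγ.2 (le_sup_left.trans_eq e.symm))
    have h2 : γ ⊔ u ≤ v := sup_le hγ.1 huv.lt.le
    rcases eq_or_lt_of_le h2 with e | hlt'
    · exact e
    · exact absurd hlt' (huv.2 h1)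

lemma aux_cover_iff_contract (h : IsLatCong θ) {u v γ : L} (hγv : γ ≤ v) (hγu : ¬ γ ≤ u)
    (hsup : γ ⊔ u = v) : θ u v ↔ θ γ (u ⊓ γ) := by
  constructor
  · intro huv
    have := (h.2 u v γ γ huv (h.1.refl γ)).2
    rw [inf_eq_right.mpr hγv] at this
    exact h.1.symm this
  · intro hθ
    have := (h.2 γ (u ⊓ γ) u u hθ (h.1.refl u)).1
    rw [hsup, sup_eq_right.mpr inf_le_left] at this
    exact h.1.symm this

lemma aux_contracts_iff (h : IsLatCong θ) {γ γs : L} (hcov : γs ⋖ γ)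
    (huniq : ∀ w, w ⋖ γ → w = γs) : Contracts θ γ ↔ θ γ γs := by
  constructor
  · rintro ⟨γs', hcov', _, hθ⟩
    rwa [huniq γs' hcov'] at hθ
  · intro hθ
    exact ⟨γs, hcov, huniq, hθ⟩

end Aux

/-- Let `L` be a finite semi-distributive lattice with an
anti-automorphism `α`, and let `σ` send each join-irreducible `γ` to the unique
meet-irreducible `μ` with `γ ⊓ μ = γ∗` and `γ ⊔ μ = μ*`. If `θ₁` contracts exactly
the set `C₁` of join-irreducibles and `θ₂` contracts exactly `α(σ(C₁))`, then `α`
maps `θ₁`-classes to `θ₂`-classes, inducing an anti-isomorphism `L/θ₁ → L/θ₂`. -/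
theorem stmt_19 {L : Type*} [Lattice L] [Fintype L] (α : L ≃ L)
    (hα : ∀ x y : L, x ≤ y ↔ α y ≤ α x)
    (hJSD : ∀ x y z : L, x ⊔ y = x ⊔ z → x ⊔ (y ⊓ z) = x ⊔ y)
    (hMSD : ∀ x y z : L, x ⊓ y = x ⊓ z → x ⊓ (y ⊔ z) = x ⊓ y)
    (σ : L → L)
    (hσ : ∀ γ γs : L, γs ⋖ γ → (∀ u : L, u ⋖ γ → u = γs) →
      ∃ μs : L, σ γ ⋖ μs ∧ (∀ v : L, σ γ ⋖ v → v = μs) ∧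
        γ ⊓ σ γ = γs ∧ γ ⊔ σ γ = μs)
    (θ₁ θ₂ : L → L → Prop) (h1 : IsLatCong θ₁) (h2 : IsLatCong θ₂)
    (hC : {γ : L | Contracts θ₂ γ} = (fun γ => α (σ γ)) '' {γ : L | Contracts θ₁ γ}) :
    ∀ a b : L, θ₁ a b ↔ θ₂ (α a) (α b) := by
  -- basic facts about α
  have hαlt : ∀ x y : L, x < y ↔ α y < α x := by
    intro x y
    rw [lt_iff_le_not_ge, lt_iff_le_not_ge, hα x y, hα y x]
  have hαcov : ∀ x y : L, x ⋖ y → α y ⋖ α x := by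
    intro x y hxy
    refine ⟨(hαlt x y).mp hxy.lt, fun c h1c h2c => ?_⟩
    have e : c = α (α.symm c) := (α.apply_symm_apply c).symm
    rw [e] at h1c h2c
    exact hxy.2 ((hαlt x (α.symm c)).mpr h2c) ((hαlt (α.symm c) y).mpr h1c)
  have hαsup : ∀ a b : L, α (a ⊔ b) = α a ⊓ α b := by
    intro a b
    apply le_antisymm
    · exact le_inf ((hα a (a ⊔ b)).mp le_sup_left) ((hα b (a ⊔ b)).mp le_sup_right)
    · set z := α.symm (α a ⊓ α b) with hz
      have hza : a ≤ z := by
        rw [hα a z, hz, α.apply_symm_apply]; exact inf_le_left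
      have hzb : b ≤ z := by
        rw [hα b z, hz, α.apply_symm_apply]; exact inf_le_right
      have := (hα (a ⊔ b) z).mp (sup_le hza hzb)
      rwa [hz, α.apply_symm_apply] at this
  have hαinf : ∀ a b : L, α (a ⊓ b) = α a ⊔ α b := by
    intro a b
    apply le_antisymm
    · set z := α.symm (α a ⊔ α b) with hz
      have hza : z ≤ a := by
        rw [hα z a]
        calc α a ≤ α a ⊔ α b := le_sup_left
          _ = α z := by rw [hz, α.apply_symm_apply]
      have hzb : z ≤ b := by
        rw [hα z b]
        calc α b ≤ α a ⊔ α b := le_sup_right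
          _ = α z := by rw [hz, α.apply_symm_apply]
      have := (hα z (a ⊓ b)).mp (le_inf hza hzb)
      rwa [hz, α.apply_symm_apply] at this
    · exact sup_le ((hα (a ⊓ b) a).mp inf_le_left) ((hα (a ⊓ b) b).mp inf_le_right)
  -- the pulled-back congruence
  set θ₂' : L → L → Prop := fun x y => θ₂ (α x) (α y) with hθ₂'
  have h2' : IsLatCong θ₂' := by
    constructor
    · exact ⟨fun x => h2.1.refl _, fun h => h2.1.symm h, fun h h' => h2.1.trans h h'⟩
    · intro a₁ a₂ b₁ b₂ ha hb
      constructor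
      · show θ₂ (α (a₁ ⊔ b₁)) (α (a₂ ⊔ b₂))
        rw [hαsup, hαsup]
        exact (h2.2 _ _ _ _ ha hb).2
      · show θ₂ (α (a₁ ⊓ b₁)) (α (a₂ ⊓ b₂))
        rw [hαinf, hαinf]
        exact (h2.2 _ _ _ _ ha hb).1
  -- key fact: for join-irreducibles, θ₁ and θ₂' contract the same ones
  have hkey : ∀ γ γs : L, γs ⋖ γ → (∀ w : L, w ⋖ γ → w = γs) → (θ₁ γ γs ↔ θ₂' γ γs) := by
    intro γ γs hcov huniq
    obtain ⟨μs, hcovμ, huniqμ, hinfμ, hsupμ⟩ := hσ γ γs hcov huniq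
    -- α μs is the unique lower cover of α (σ γ)
    have hcovα : α μs ⋖ α (σ γ) := hαcov _ _ hcovμ
    have huniqα : ∀ w, w ⋖ α (σ γ) → w = α μs := by
      intro w hw
      have e : w = α (α.symm w) := (α.apply_symm_apply w).symm
      have hw' : σ γ ⋖ α.symm w := by
        refine ⟨?_, fun c h1c h2c => ?_⟩
        · have := hw.lt
          rw [e] at this
          exact (hαlt (σ γ) (α.symm w)).mpr this
        · rw [e] at hw
          exact hw.2 ((hαlt c (α.symm w)).mp h2c) ((hαlt (σ γ) c).mp h1c)
      rw [e, huniqμ _ hw']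
    -- Contracts θ₁ γ ↔ Contracts θ₂ (α (σ γ))
    have hCiff : Contracts θ₁ γ ↔ Contracts θ₂ (α (σ γ)) := by
      constructor
      · intro hc
        have : α (σ γ) ∈ {δ : L | Contracts θ₂ δ} := by
          rw [hC]; exact ⟨γ, hc, rfl⟩
        exact this
      · intro hc
        have : α (σ γ) ∈ (fun γ => α (σ γ)) '' {γ : L | Contracts θ₁ γ} := by
          rw [← hC]; exact hc
        obtain ⟨γ', hγ', heq⟩ := this
        have hσeq : σ γ' = σ γ := α.injective heq
        -- show γ' = γ using semidistributivity
        obtain ⟨γ's, hcov', huniq', hθ'⟩ := hγ'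
        obtain ⟨μs', hcovμ', huniqμ', hinfμ', hsupμ'⟩ := hσ γ' γ's hcov' huniq'
        rw [hσeq] at hcovμ' hinfμ' hsupμ'
        have hμseq : μs' = μs := huniqμ _ hcovμ'
        rw [hμseq] at hsupμ'
        have hbelow : ∀ x, x < γ → x ≤ γs := by
          intro x hx
          obtain ⟨w, hxw, hwγ⟩ := aux_exists_covby hx
          rw [← huniq w hwγ]; exact hxw
        have hbelow' : ∀ x, x < γ' → x ≤ γ's := by
          intro x hx
          obtain ⟨w, hxw, hwγ⟩ := aux_exists_covby hx
          rw [← huniq' w hwγ]; exact hxw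
        have hj : σ γ ⊔ (γ ⊓ γ') = σ γ ⊔ γ := by
          apply hJSD
          rw [sup_comm (σ γ) γ, sup_comm (σ γ) γ', hsupμ, hsupμ']
        have hnotle : ¬ (γ ⊓ γ' ≤ σ γ) := by
          intro hle
          rw [sup_eq_left.mpr hle, sup_comm, hsupμ] at hj
          exact hcovμ.lt.ne hj
        have hγγ' : γ = γ' := by
          have h1 : γ ⊓ γ' = γ := by
            rcases eq_or_lt_of_le (inf_le_left : γ ⊓ γ' ≤ γ) with e | hlt
            · exact e
            · exact absurd ((hbelow _ hlt).trans (hinfμ ▸ inf_le_right)) hnotle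
          have h2 : γ ⊓ γ' = γ' := by
            rcases eq_or_lt_of_le (inf_le_right : γ ⊓ γ' ≤ γ') with e | hlt
            · exact e
            · exact absurd ((hbelow' _ hlt).trans (hinfμ' ▸ inf_le_right)) hnotle
          rw [← h1, h2]
        rw [hγγ'] at hcov huniq ⊢
        exact ⟨γ's, hcov', huniq', hθ'⟩
    -- perspectivity for θ₂': θ₂' (σ γ) μs ↔ θ₂' γ γs
    have hpersp : θ₂' (σ γ) μs ↔ θ₂' γ γs := by
      constructor
      · intro hμ
        have := (h2'.2 γ γ (σ γ) μs (h2'.1.refl γ) hμ).2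
        rw [hinfμ, inf_eq_left.mpr (hsupμ ▸ le_sup_left : γ ≤ μs)] at this
        exact h2'.1.symm this
      · intro hγ
        have := (h2'.2 γ γs (σ γ) (σ γ) hγ (h2'.1.refl (σ γ))).1
        rw [hsupμ, sup_eq_right.mpr (hinfμ ▸ inf_le_right : γs ≤ σ γ)] at this
        exact h2'.1.symm this
    calc θ₁ γ γs ↔ Contracts θ₁ γ := (aux_contracts_iff h1 hcov huniq).symm
      _ ↔ Contracts θ₂ (α (σ γ)) := hCiff
      _ ↔ θ₂ (α (σ γ)) (α μs) := aux_contracts_iff h2 hcovα huniqα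
      _ ↔ θ₂' (σ γ) μs := Iff.rfl
      _ ↔ θ₂' γ γs := hpersp
  -- covers collapse the same way
  have hcoviff : ∀ u v : L, u ⋖ v → (θ₁ u v ↔ θ₂' u v) := by
    intro u v huv
    obtain ⟨γ, hγv, hγu, hcovγ, huniqγ, hsupγ⟩ := aux_min huv
    rw [aux_cover_iff_contract h1 hγv hγu hsupγ, aux_cover_iff_contract h2' hγv hγu hsupγ]
    exact hkey γ (u ⊓ γ) hcovγ huniqγ
  intro a b
  exact aux_cong_iff h1 h2' hcoviff a b
end
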